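/- arXiv:2206.11099 — 6 statements merged into one kernel-verified Lean document; each statement's English description precedes it below -/
import Mathlib

section
/- Let D be a semi-Heyting sublattice of a bounded distributive lattice E, let a, b ∈ E, and set B := BR(D), viewed as a generalized Boolean subalgebra of BR(E). Assume: (1) E is generated as a lattice by D ∪ {a, b}; (2) a ∧ b = 0; (3) the elements a_B, b_B, (a ∨ b)_B, a^B, b^B all exist in BR(E) relative to the subset B; (4) (a ∨ b)_B = a_B ∨ b_B. Then c^B ∈ D for every c ∈ {a, b, a ∨ b}. Moreover, for every distributive 0-lattice L, every 0-lattice homomorphism f : D → L, and all α, β ∈ L, the following are equivalent: (i) there is a lattice homomorphism g : E → L extending f with g(a) = α and g(b) = β; (ii) α ≤ f(a^B), β ≤ f(b^B), α ∧ β = 0, BR(f)(a_B) ≤ α in BR(L), and BR(f)(b_B) ≤ β in BR(L). -/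
namespace Stmt6Aux

variable {C : Type*} [GeneralizedBooleanAlgebra C]

theorem sdiff_inf_sdiff' (x y u v : C) : (x \ y) ⊓ (u \ v) = (x ⊓ u) \ (y ⊔ v) := by
  rw [sdiff_sup, ← sdiff_inf_right_comm, inf_sdiff_assoc]
  exact le_antisymm (le_inf (inf_le_inf_left _ sdiff_le) (inf_le_inf_right _ sdiff_le))
    (le_inf (inf_le_of_left_le inf_le_left) (inf_le_of_right_le inf_le_right))

theorem sdiff_sdiff_expand (x y u v : C) :
    (x \ y) \ (u \ v) = (x \ (y ⊔ u)) ⊔ ((x ⊓ v) \ y) := by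
  rw [sdiff_sdiff_right, sdiff_sdiff_left, ← sdiff_inf_right_comm]
  apply le_antisymm
  · exact sup_le le_sup_left
      (le_sup_of_le_right (le_inf (inf_le_of_left_le inf_le_left) inf_le_right))
  · apply sup_le le_sup_left
    have h1 : x \ y ≤ x \ (y ⊔ u) ⊔ x \ y ⊓ u := by
      nth_rewrite 1 [← sup_sdiff_inf (x \ y) u]
      rw [sdiff_sdiff_left]
    calc x \ y ⊓ v ≤ (x \ (y ⊔ u) ⊔ x \ y ⊓ u) ⊓ v := inf_le_inf_right _ h1
    _ = x \ (y ⊔ u) ⊓ v ⊔ x \ y ⊓ u ⊓ v := by rw [inf_sup_right]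
    _ ≤ _ := sup_le (le_sup_of_le_left inf_le_left) le_sup_right

theorem sdiff_le_sdiff_sup_iff (x y u v z : C) :
    x \ y ≤ (u \ v) ⊔ z ↔ x \ (y ⊔ u) ≤ z ∧ (x ⊓ v) \ y ≤ z := by
  constructor
  · intro h
    have h' : (x \ y) \ (u \ v) ≤ z := by
      rw [sdiff_le_iff]; exact h
    rw [sdiff_sdiff_expand] at h'
    exact ⟨le_trans le_sup_left h', le_trans le_sup_right h'⟩
  · rintro ⟨h1, h2⟩
    have h' : (x \ y) \ (u \ v) ≤ z := by rw [sdiff_sdiff_expand]; exact sup_le h1 h2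
    calc x \ y ≤ (u \ v) ⊔ ((x \ y) \ (u \ v)) := le_sup_sdiff
        _ ≤ (u \ v) ⊔ z := sup_le_sup_left h' _

variable {E : Type*} [Lattice E]

/-- evaluation of a list of pairs as a join of differences -/
def evalL (h : E → C) : List (E × E) → C
  | [] => ⊥
  | p :: l => (h p.1 \ h p.2) ⊔ evalL h l

theorem evalL_append (h : E → C) (l₁ l₂ : List (E × E)) :
    evalL h (l₁ ++ l₂) = evalL h l₁ ⊔ evalL h l₂ := by
  induction l₁ with
  | nil => simp [evalL]
  | cons p l ih => simp [evalL, ih, sup_assoc]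

/-- product list, for meets -/
def prodL (l₁ l₂ : List (E × E)) : List (E × E) :=
  l₁.flatMap fun p => l₂.map fun q => (p.1 ⊓ q.1, p.2 ⊔ q.2)

/-- difference of a single term and a list -/
def sdTL : E × E → List (E × E) → List (E × E)
  | p, [] => [p]
  | p, q :: l => sdTL (p.1, p.2 ⊔ q.1) l ++ sdTL (p.1 ⊓ q.2, p.2) l

/-- difference of two lists -/
def sdL (l₁ l₂ : List (E × E)) : List (E × E) := l₁.flatMap fun p => sdTL p l₂

section
variable (h : E → C) (hhom : ∀ x y : E, h (x ⊔ y) = h x ⊔ h y ∧ h (x ⊓ y) = h x ⊓ h y)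

include hhom

theorem evalL_prodT (p : E × E) (l : List (E × E)) :
    evalL h (l.map fun q => (p.1 ⊓ q.1, p.2 ⊔ q.2)) = (h p.1 \ h p.2) ⊓ evalL h l := by
  induction l with
  | nil => simp [evalL]
  | cons q l ih =>
      simp only [List.map_cons, evalL, ih, (hhom _ _).1, (hhom _ _).2, inf_sup_left]
      rw [sdiff_inf_sdiff']

theorem evalL_prodL (l₁ l₂ : List (E × E)) :
    evalL h (prodL l₁ l₂) = evalL h l₁ ⊓ evalL h l₂ := by
  induction l₁ with
  | nil => simp [evalL, prodL]
  | cons p l ih =>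
      simp only [prodL, List.flatMap_cons, evalL, evalL_append, inf_sup_right]
      rw [evalL_prodT h hhom]
      simp only [prodL] at ih
      rw [ih]

theorem evalL_sdTL (p : E × E) (l : List (E × E)) :
    evalL h (sdTL p l) = (h p.1 \ h p.2) \ evalL h l := by
  induction l generalizing p with
  | nil => simp [evalL, sdTL]
  | cons q l ih =>
      show evalL h (sdTL (p.1, p.2 ⊔ q.1) l ++ sdTL (p.1 ⊓ q.2, p.2) l)
          = (h p.1 \ h p.2) \ ((h q.1 \ h q.2) ⊔ evalL h l)
      rw [evalL_append, ih, ih, (hhom p.2 q.1).1, (hhom p.1 q.2).2,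
        ← sup_sdiff, ← sdiff_sdiff_expand, sdiff_sdiff_left]

theorem evalL_sdL (l₁ l₂ : List (E × E)) :
    evalL h (sdL l₁ l₂) = evalL h l₁ \ evalL h l₂ := by
  induction l₁ with
  | nil => simp [evalL, sdL]
  | cons p l ih =>
      simp only [sdL, List.flatMap_cons, evalL, evalL_append, sup_sdiff]
      rw [evalL_sdTL h hhom]
      simp only [sdL] at ih
      rw [ih]


set_option linter.unusedSectionVars false

end

/-- the lattice-theoretic criterion for `h u \ h v ≤ evalL h l` -/
def Cond : E → E → List (E × E) → Prop
  | u, v, [] => u ≤ v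
  | u, v, p :: l => Cond u (v ⊔ p.1) l ∧ Cond (u ⊓ p.2) v l

theorem cond_antitone {u u' v : E} {l : List (E × E)} (huu : u' ≤ u) (hc : Cond u v l) :
    Cond u' v l := by
  induction l generalizing u u' v with
  | nil => exact le_trans huu hc
  | cons p l ih => exact ⟨ih huu hc.1, ih (inf_le_inf_right _ huu) hc.2⟩

section
variable {P : E → Prop} (hPsup : ∀ x, P x → ∀ y, P y → P (x ⊔ y))
  (hPinf : ∀ x, P x → ∀ y, P y → P (x ⊓ y))

def goodL (P : E → Prop) (l : List (E × E)) : Prop := ∀ p ∈ l, P p.1 ∧ P p.2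

theorem goodL_append {l₁ l₂ : List (E × E)} (h1 : goodL P l₁) (h2 : goodL P l₂) :
    goodL P (l₁ ++ l₂) := by
  intro p hp
  rcases List.mem_append.1 hp with h | h
  · exact h1 p h
  · exact h2 p h

include hPsup hPinf in
theorem goodL_prodL {l₁ l₂ : List (E × E)} (h1 : goodL P l₁) (h2 : goodL P l₂) :
    goodL P (l₁.flatMap fun p => l₂.map fun q => (p.1 ⊓ q.1, p.2 ⊔ q.2)) := by
  intro p hp
  simp only [List.mem_flatMap, List.mem_map] at hp
  obtain ⟨r, hr, q, hq, rfl⟩ := hp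
  exact ⟨hPinf _ (h1 r hr).1 _ (h2 q hq).1, hPsup _ (h1 r hr).2 _ (h2 q hq).2⟩


include hPsup hPinf in
theorem goodL_sdTL {p : E × E} {l : List (E × E)} (hp : P p.1 ∧ P p.2) (h2 : goodL P l) :
    goodL P (sdTL p l) := by
  induction l generalizing p with
  | nil =>
      intro q hq
      simp only [sdTL, List.mem_singleton] at hq
      subst hq; exact hp
  | cons q l ih =>
      have hq := h2 q (List.mem_cons_self)
      have h2' : goodL P l := fun r hr => h2 r (List.mem_cons_of_mem _ hr)
      exact goodL_append (ih (p := (p.1, p.2 ⊔ q.1)) ⟨hp.1, hPsup _ hp.2 _ hq.1⟩ h2')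
        (ih (p := (p.1 ⊓ q.2, p.2)) ⟨hPinf _ hp.1 _ hq.2, hp.2⟩ h2')

include hPsup hPinf in
theorem goodL_sdL {l₁ l₂ : List (E × E)} (h1 : goodL P l₁) (h2 : goodL P l₂) :
    goodL P (l₁.flatMap fun p => sdTL p l₂) := by
  intro p hp
  simp only [List.mem_flatMap] at hp
  obtain ⟨r, hr, hmem⟩ := hp
  exact goodL_sdTL hPsup hPinf (h1 r hr) h2 p hmem

end

section
variable (h : E → C) (hhom : ∀ x y : E, h (x ⊔ y) = h x ⊔ h y ∧ h (x ⊓ y) = h x ⊓ h y)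

include hhom in
theorem hom_mono (x y : E) (hxy : x ≤ y) : h x ≤ h y := by
  have : h (x ⊔ y) = h x ⊔ h y := (hhom x y).1
  rw [sup_eq_right.2 hxy] at this
  rw [this]; exact le_sup_left

include hhom in
theorem cond_of_le (hrefl : ∀ x y : E, h x ≤ h y → x ≤ y) (u v : E) (l : List (E × E)) :
    h u \ h v ≤ evalL h l ↔ Cond u v l := by
  induction l generalizing u v with
  | nil =>
      show h u \ h v ≤ ⊥ ↔ u ≤ v
      rw [le_bot_iff, sdiff_eq_bot_iff]
      exact ⟨hrefl u v, hom_mono h hhom u v⟩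
  | cons p l ih =>
      show h u \ h v ≤ (h p.1 \ h p.2) ⊔ evalL h l ↔ _
      rw [sdiff_le_sdiff_sup_iff, ← (hhom v p.1).1, ← (hhom u p.2).2, ih, ih]
      exact Iff.rfl
end

theorem hom_mono2 {E K : Type*} [Lattice E] [Lattice K] (h : E → K)
    (hhom : ∀ x y : E, h (x ⊔ y) = h x ⊔ h y ∧ h (x ⊓ y) = h x ⊓ h y)
    (x y : E) (hxy : x ≤ y) : h x ≤ h y := by
  have hs : h (x ⊔ y) = h x ⊔ h y := (hhom x y).1
  rw [sup_eq_right.2 hxy] at hs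
  rw [hs]; exact le_sup_left

section
variable {K : Type*} [DistribLattice K]

theorem tri_sup (a b d0 d1 d2 e0 e1 e2 : K) :
    (d0 ⊔ d1 ⊓ a ⊔ d2 ⊓ b) ⊔ (e0 ⊔ e1 ⊓ a ⊔ e2 ⊓ b)
      = (d0 ⊔ e0) ⊔ ((d1 ⊔ e1) ⊓ a) ⊔ ((d2 ⊔ e2) ⊓ b) := by
  simp only [inf_sup_right]
  ac_rfl

theorem tri_inf [OrderBot K] (a b d0 d1 d2 e0 e1 e2 : K)
    (hab : a ⊓ b = ⊥) (h1 : d0 ≤ d1) (h2 : d0 ≤ d2) (h3 : e0 ≤ e1) (h4 : e0 ≤ e2) :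
    (d0 ⊔ d1 ⊓ a ⊔ d2 ⊓ b) ⊓ (e0 ⊔ e1 ⊓ a ⊔ e2 ⊓ b)
      = (d0 ⊓ e0) ⊔ (d1 ⊓ e1 ⊓ a) ⊔ (d2 ⊓ e2 ⊓ b) := by
  have hba : b ⊓ a = ⊥ := by rw [inf_comm]; exact hab
  apply le_antisymm
  · rw [inf_sup_right, inf_sup_right]
    apply sup_le (sup_le ?_ ?_) ?_ <;> rw [inf_sup_left, inf_sup_left] <;>
      apply sup_le (sup_le ?_ ?_) ?_
    · exact le_sup_of_le_left le_sup_left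
    · exact le_sup_of_le_left (le_sup_of_le_right (le_inf (le_inf (inf_le_left.trans h1)
        (inf_le_right.trans inf_le_left)) (inf_le_right.trans inf_le_right)))
    · exact le_sup_of_le_right (le_inf (le_inf (inf_le_left.trans h2)
        (inf_le_right.trans inf_le_left)) (inf_le_right.trans inf_le_right))
    · exact le_sup_of_le_left (le_sup_of_le_right (le_inf (le_inf (inf_le_left.trans inf_le_left)
        (inf_le_right.trans h3)) (inf_le_left.trans inf_le_right)))
    · exact le_sup_of_le_left (le_sup_of_le_right (le_inf (le_inf (inf_le_left.trans inf_le_left)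
        (inf_le_right.trans inf_le_left)) (inf_le_left.trans inf_le_right)))
    · refine le_trans (le_inf (inf_le_left.trans inf_le_right)
        (inf_le_right.trans inf_le_right) : _ ≤ a ⊓ b) ?_
      rw [hab]; exact bot_le
    · exact le_sup_of_le_right (le_inf (le_inf (inf_le_left.trans inf_le_left)
        (inf_le_right.trans h4)) (inf_le_left.trans inf_le_right))
    · refine le_trans (le_inf (inf_le_left.trans inf_le_right)
        (inf_le_right.trans inf_le_right) : _ ≤ b ⊓ a) ?_
      rw [hba]; exact bot_le
    · exact le_sup_of_le_right (le_inf (le_inf (inf_le_left.trans inf_le_left)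
        (inf_le_right.trans inf_le_left)) (inf_le_left.trans inf_le_right))
  · apply sup_le (sup_le ?_ ?_) ?_
    · exact le_inf (inf_le_left.trans (le_sup_of_le_left le_sup_left))
        (inf_le_right.trans (le_sup_of_le_left le_sup_left))
    · refine le_inf (le_trans ?_ (le_sup_of_le_left le_sup_right))
        (le_trans ?_ (le_sup_of_le_left le_sup_right))
      · exact le_inf (inf_le_left.trans inf_le_left) inf_le_right
      · exact le_inf (inf_le_left.trans inf_le_right) inf_le_right
    · refine le_inf (le_trans ?_ le_sup_right) (le_trans ?_ le_sup_right)
      · exact le_inf (inf_le_left.trans inf_le_left) inf_le_right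
      · exact le_inf (inf_le_left.trans inf_le_right) inf_le_right
end

end Stmt6Aux

open Stmt6Aux

/-- Membership in the sublattice generated by a subset `S`. -/
inductive LatClosure {E : Type*} [Lattice E] (S : Set E) : E → Prop
  | base {x : E} (hx : x ∈ S) : LatClosure S x
  | sup {x y : E} : LatClosure S x → LatClosure S y → LatClosure S (x ⊔ y)
  | inf {x y : E} : LatClosure S x → LatClosure S y → LatClosure S (x ⊓ y)

/-- Membership in the generalized Boolean subalgebra generated by a subset `S`. -/
inductive GBAClosure {C : Type*} [GeneralizedBooleanAlgebra C] (S : Set C) : C → Prop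
  | base {x : C} (hx : x ∈ S) : GBAClosure S x
  | bot : GBAClosure S ⊥
  | sup {x y : C} : GBAClosure S x → GBAClosure S y → GBAClosure S (x ⊔ y)
  | inf {x y : C} : GBAClosure S x → GBAClosure S y → GBAClosure S (x ⊓ y)
  | sdiff {x y : C} : GBAClosure S x → GBAClosure S y → GBAClosure S (x \ y)

/-- Main Extension Lemma, first part: `D` is a semi-Heyting `0,1`-sublattice
of the bounded distributive lattice `E` (for `x, y ∈ D` the implication `x →_E y` exists
and lies in `D`); the Boolean envelope `BR(E)` is represented by a generalized Boolean
algebra `C` with a generating `0`-lattice embedding `j : E → C`, and `B = BR(D)` is the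
generalized Boolean subalgebra of `C` generated by `j '' D`.  `aB, bB, abB` are
`a_B, b_B, (a ⊔ b)_B` and `aT, bT` are `a^B, b^B`.  `BR(L)` is represented by `(M, jL)`
and `F : C → M` restricts on `B` to `BR(f)`.  Conclusion: `c^B ∈ D` for
`c ∈ {a, b, a ⊔ b}`, and `(α, β)` arises from a lattice homomorphism `g : E → L`
extending `f` with `g a = α`, `g b = β` iff condition (ii) holds. -/
theorem stmt6 {E C L M : Type*}
    [DistribLattice E] [BoundedOrder E] [DistribLattice L] [OrderBot L]
    [GeneralizedBooleanAlgebra C] [GeneralizedBooleanAlgebra M]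
    (D : Set E) (hDbot : ⊥ ∈ D) (hDtop : ⊤ ∈ D)
    (hDsup : ∀ x ∈ D, ∀ y ∈ D, x ⊔ y ∈ D) (hDinf : ∀ x ∈ D, ∀ y ∈ D, x ⊓ y ∈ D)
    (hSH : ∀ x ∈ D, ∀ y ∈ D, ∃ z ∈ D, IsGreatest {w : E | x ⊓ w ≤ y} z)
    (j : E → C) (hjinj : Function.Injective j)
    (hjhom : ∀ x y : E, j (x ⊔ y) = j x ⊔ j y ∧ j (x ⊓ y) = j x ⊓ j y)
    (hjbot : j ⊥ = ⊥) (hjgen : ∀ c : C, GBAClosure (Set.range j) c)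
    (a b : E)
    (hgenE : ∀ x : E, LatClosure (D ∪ {a, b}) x)
    (hab : a ⊓ b = ⊥)
    (aB bB abB aT bT : C)
    (haB : IsGreatest {z : C | GBAClosure (j '' D) z ∧ z ≤ j a} aB)
    (hbB : IsGreatest {z : C | GBAClosure (j '' D) z ∧ z ≤ j b} bB)
    (habB : IsGreatest {z : C | GBAClosure (j '' D) z ∧ z ≤ j (a ⊔ b)} abB)
    (haT : IsLeast {z : C | GBAClosure (j '' D) z ∧ j a ≤ z} aT)
    (hbT : IsLeast {z : C | GBAClosure (j '' D) z ∧ j b ≤ z} bT)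
    (habB4 : abB = aB ⊔ bB)
    (f : E → L)
    (hfD : ∀ x ∈ D, ∀ y ∈ D, f (x ⊔ y) = f x ⊔ f y ∧ f (x ⊓ y) = f x ⊓ f y)
    (hf0 : f ⊥ = ⊥)
    (jL : L → M) (hjLinj : Function.Injective jL)
    (hjLhom : ∀ x y : L, jL (x ⊔ y) = jL x ⊔ jL y ∧ jL (x ⊓ y) = jL x ⊓ jL y)
    (hjLbot : jL ⊥ = ⊥) (hjLgen : ∀ m : M, GBAClosure (Set.range jL) m)
    (F : C → M)
    (hFj : ∀ x ∈ D, F (j x) = jL (f x))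
    (hFhom : ∀ c c' : C, GBAClosure (j '' D) c → GBAClosure (j '' D) c' →
      F (c ⊔ c') = F c ⊔ F c' ∧ F (c ⊓ c') = F c ⊓ F c' ∧ F (c \ c') = F c \ F c')
    (hF0 : F ⊥ = ⊥) :
    ((∃ d ∈ D, j d = aT) ∧ (∃ d ∈ D, j d = bT) ∧
      (∃ d ∈ D, IsLeast {z : C | GBAClosure (j '' D) z ∧ j (a ⊔ b) ≤ z} (j d))) ∧
    (∀ α β : L,
      (∃ g : E → L,
          (∀ x y : E, g (x ⊔ y) = g x ⊔ g y ∧ g (x ⊓ y) = g x ⊓ g y) ∧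
          (∀ x ∈ D, g x = f x) ∧ g a = α ∧ g b = β) ↔
        ((∀ d ∈ D, j d = aT → α ≤ f d) ∧ (∀ d ∈ D, j d = bT → β ≤ f d) ∧
          α ⊓ β = ⊥ ∧ F aB ≤ jL α ∧ F bB ≤ jL β)) := by
  classical
  choose! arr harrD harrG using hSH
  -- order reflection for j
  have hjmono : ∀ x y : E, x ≤ y → j x ≤ j y := fun x y h => hom_mono j hjhom x y h
  have hjrefl : ∀ x y : E, j x ≤ j y → x ≤ y := by
    intro x y h
    have : j (x ⊔ y) = j y := by rw [(hjhom x y).1, sup_eq_right.2 h]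
    have := hjinj this
    exact le_of_sup_eq this
  have hjLmono : ∀ x y : L, x ≤ y → jL x ≤ jL y := fun x y h => hom_mono jL hjLhom x y h
  have hjLrefl : ∀ x y : L, jL x ≤ jL y → x ≤ y := by
    intro x y h
    have : jL (x ⊔ y) = jL y := by rw [(hjLhom x y).1, sup_eq_right.2 h]
    exact le_of_sup_eq (hjLinj this)
  have hfmono : ∀ x ∈ D, ∀ y ∈ D, x ≤ y → f x ≤ f y := by
    intro x hx y hy h
    have : f (x ⊔ y) = f y := by rw [sup_eq_right.2 h]
    rw [(hfD x hx y hy).1] at this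
    exact le_of_sup_eq this
  -- B-closure of evaluations
  have hBeval : ∀ l : List (E × E), goodL (· ∈ D) l → GBAClosure (j '' D) (evalL j l) := by
    intro l hl
    induction l with
    | nil => exact GBAClosure.bot
    | cons p l ih =>
        have hp := hl p (List.mem_cons_self)
        exact GBAClosure.sup
          (GBAClosure.sdiff (GBAClosure.base ⟨p.1, hp.1, rfl⟩) (GBAClosure.base ⟨p.2, hp.2, rfl⟩))
          (ih fun q hq => hl q (List.mem_cons_of_mem _ hq))
  -- normal form for elements of B
  have hNFB : ∀ z : C, GBAClosure (j '' D) z → ∃ l : List (E × E),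
      goodL (· ∈ D) l ∧ evalL j l = z := by
    intro z hz
    induction hz with
    | base hx =>
        obtain ⟨d, hd, rfl⟩ := hx
        refine ⟨[(d, ⊥)], ?_, ?_⟩
        · intro p hp; simp only [List.mem_singleton] at hp; subst hp; exact ⟨hd, hDbot⟩
        · simp [evalL, hjbot]
    | bot => exact ⟨[], fun p hp => absurd hp List.not_mem_nil, rfl⟩
    | sup hx hy ihx ihy =>
        obtain ⟨l₁, h1, e1⟩ := ihx; obtain ⟨l₂, h2, e2⟩ := ihy
        exact ⟨l₁ ++ l₂, goodL_append h1 h2, by rw [evalL_append, e1, e2]⟩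
    | inf hx hy ihx ihy =>
        obtain ⟨l₁, h1, e1⟩ := ihx; obtain ⟨l₂, h2, e2⟩ := ihy
        exact ⟨prodL l₁ l₂, goodL_prodL hDsup hDinf h1 h2,
          by rw [evalL_prodL j hjhom, e1, e2]⟩
    | sdiff hx hy ihx ihy =>
        obtain ⟨l₁, h1, e1⟩ := ihx; obtain ⟨l₂, h2, e2⟩ := ihy
        exact ⟨sdL l₁ l₂, goodL_sdL hDsup hDinf h1 h2,
          by rw [evalL_sdL j hjhom, e1, e2]⟩
  have hcond : ∀ (u v : E) (l : List (E × E)), j u \ j v ≤ evalL j l ↔ Cond u v l :=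
    cond_of_le j hjhom hjrefl
  -- the key closure lemma producing a D-majorant
  have LemC : ∀ (c : E) (l : List (E × E)), goodL (· ∈ D) l → ∀ m ∈ D, ∀ v ∈ D,
      Cond (c ⊓ m) v l → ∃ d ∈ D, c ⊓ m ≤ d ∧ Cond (d ⊓ m) v l := by
    intro c l
    induction l with
    | nil =>
        intro _ m hm v hv hc
        refine ⟨arr m v, harrD m hm v hv, ?_, ?_⟩
        · exact (harrG m hm v hv).2 (le_trans inf_le_right hc)
        · show arr m v ⊓ m ≤ v
          rw [inf_comm]
          exact (harrG m hm v hv).1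
    | cons p l ih =>
        intro hl m hm v hv hc
        obtain ⟨hc1, hc2⟩ := hc
        have hpD := hl p (List.mem_cons_self)
        have hl' : goodL (· ∈ D) l := fun q hq => hl q (List.mem_cons_of_mem _ hq)
        obtain ⟨d₁, hd₁D, hcd₁, hC1⟩ := ih hl' m hm (v ⊔ p.1) (hDsup v hv p.1 hpD.1) hc1
        have hc2' : Cond (c ⊓ (m ⊓ p.2)) v l := by rwa [← inf_assoc]
        obtain ⟨d₂, hd₂D, hcd₂, hC2⟩ := ih hl' (m ⊓ p.2) (hDinf m hm p.2 hpD.2) v hv hc2'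
        have hd₂' : arr p.2 d₂ ∈ D := harrD p.2 hpD.2 d₂ hd₂D
        have hcm2 : c ⊓ m ≤ arr p.2 d₂ := by
          apply (harrG p.2 hpD.2 d₂ hd₂D).2
          show p.2 ⊓ (c ⊓ m) ≤ d₂
          calc p.2 ⊓ (c ⊓ m) = c ⊓ (m ⊓ p.2) := by
                rw [inf_comm p.2, inf_assoc]
          _ ≤ d₂ := hcd₂
        refine ⟨d₁ ⊓ arr p.2 d₂, hDinf d₁ hd₁D _ hd₂', le_inf hcd₁ hcm2, ?_, ?_⟩
        · exact cond_antitone (inf_le_inf_right m inf_le_left) hC1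
        · apply cond_antitone ?_ hC2
          show d₁ ⊓ arr p.2 d₂ ⊓ m ⊓ p.2 ≤ d₂ ⊓ (m ⊓ p.2)
          have h1 : d₁ ⊓ arr p.2 d₂ ⊓ m ⊓ p.2 ≤ d₂ := by
            calc d₁ ⊓ arr p.2 d₂ ⊓ m ⊓ p.2 ≤ arr p.2 d₂ ⊓ p.2 :=
                  le_inf (le_trans inf_le_left (le_trans inf_le_left inf_le_right)) inf_le_right
            _ ≤ d₂ := by rw [inf_comm]; exact (harrG p.2 hpD.2 d₂ hd₂D).1
          exact le_inf h1 (le_inf (le_trans inf_le_left inf_le_right) inf_le_right)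
  -- least B-element above j c is in j '' D
  have hUp : ∀ (c : E) (cT : C), IsLeast {z : C | GBAClosure (j '' D) z ∧ j c ≤ z} cT →
      ∃ d ∈ D, j d = cT := by
    intro c cT hcT
    obtain ⟨l, hlD, hle⟩ := hNFB cT hcT.1.1
    have h2 : Cond c ⊥ l := by
      apply (hcond c ⊥ l).1
      rw [hjbot, sdiff_bot, hle]
      exact hcT.1.2
    have h3 : Cond (c ⊓ ⊤) ⊥ l := by rwa [inf_top_eq]
    obtain ⟨d, hdD, hcd, hcond'⟩ := LemC c l hlD ⊤ hDtop ⊥ hDbot h3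
    have h5 : Cond d ⊥ l := by rwa [inf_top_eq] at hcond'
    have h6 : j d ≤ cT := by
      have := (hcond d ⊥ l).2 h5
      rw [hjbot, sdiff_bot, hle] at this
      exact this
    have hcd' : c ≤ d := by rwa [inf_top_eq] at hcd
    have h7 : cT ≤ j d := hcT.2 ⟨GBAClosure.base ⟨d, hdD, rfl⟩, hjmono c d hcd'⟩
    exact ⟨d, hdD, le_antisymm h6 h7⟩
  obtain ⟨da, hdaD, hda⟩ := hUp a aT haT
  obtain ⟨db, hdbD, hdb⟩ := hUp b bT hbT
  have part1 : (∃ d ∈ D, j d = aT) ∧ (∃ d ∈ D, j d = bT) ∧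
      (∃ d ∈ D, IsLeast {z : C | GBAClosure (j '' D) z ∧ j (a ⊔ b) ≤ z} (j d)) := by
    refine ⟨⟨da, hdaD, hda⟩, ⟨db, hdbD, hdb⟩, da ⊔ db, hDsup da hdaD db hdbD, ?_, ?_⟩
    · constructor
      · exact GBAClosure.base ⟨da ⊔ db, hDsup da hdaD db hdbD, rfl⟩
      · rw [(hjhom a b).1, (hjhom da db).1, hda, hdb]
        exact sup_le_sup haT.1.2 hbT.1.2
    · intro z hz
      have hza : j a ≤ z := le_trans (by rw [(hjhom a b).1]; exact le_sup_left) hz.2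
      have hzb : j b ≤ z := le_trans (by rw [(hjhom a b).1]; exact le_sup_right) hz.2
      rw [(hjhom da db).1, hda, hdb]
      exact sup_le (haT.2 ⟨hz.1, hza⟩) (hbT.2 ⟨hz.1, hzb⟩)
  refine ⟨part1, ?_⟩
  intro α β
  constructor
  · -- (i) → (ii)
    rintro ⟨g, hghom, hgD, hga, hgb⟩
    have hgmono : ∀ x y : E, x ≤ y → g x ≤ g y := hom_mono2 g hghom
    have hFle : ∀ l : List (E × E), goodL (· ∈ D) l → ∀ c : E, evalL j l ≤ j c →
        F (evalL j l) ≤ jL (g c) := by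
      intro l
      induction l with
      | nil =>
          intro _ c _
          rw [show evalL j ([] : List (E × E)) = ⊥ from rfl, hF0]
          exact bot_le
      | cons p l ih =>
          intro hl c hle
          have hp := hl p (List.mem_cons_self)
          have hl' : goodL (· ∈ D) l := fun q hq => hl q (List.mem_cons_of_mem _ hq)
          have hBp : GBAClosure (j '' D) (j p.1 \ j p.2) :=
            GBAClosure.sdiff (GBAClosure.base ⟨p.1, hp.1, rfl⟩) (GBAClosure.base ⟨p.2, hp.2, rfl⟩)
          have hsplit : F (evalL j (p :: l)) = F (j p.1 \ j p.2) ⊔ F (evalL j l) :=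
            (hFhom _ _ hBp (hBeval l hl')).1
          have h1 : j p.1 \ j p.2 ≤ j c := le_trans le_sup_left hle
          have h2 : evalL j l ≤ j c := le_trans le_sup_right hle
          have hp1 : p.1 ≤ p.2 ⊔ c := by
            apply hjrefl
            rw [(hjhom p.2 c).1]
            exact sdiff_le_iff.1 h1
          have hgle : jL (g p.1) \ jL (g p.2) ≤ jL (g c) := by
            rw [sdiff_le_iff, ← (hjLhom (g p.2) (g c)).1, ← (hghom p.2 c).1]
            exact hjLmono _ _ (hgmono _ _ hp1)
          have hFp : F (j p.1 \ j p.2) = jL (g p.1) \ jL (g p.2) := by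
            rw [(hFhom (j p.1) (j p.2) (GBAClosure.base ⟨p.1, hp.1, rfl⟩)
              (GBAClosure.base ⟨p.2, hp.2, rfl⟩)).2.2, hFj p.1 hp.1, hFj p.2 hp.2,
              hgD p.1 hp.1, hgD p.2 hp.2]
          rw [hsplit, hFp]
          exact sup_le hgle (ih hl' c h2)
    refine ⟨?_, ?_, ?_, ?_, ?_⟩
    · intro d hdD' hjd
      have had : a ≤ d := hjrefl a d (by rw [hjd]; exact haT.1.2)
      rw [← hga, ← hgD d hdD']
      exact hgmono a d had
    · intro d hdD' hjd
      have hbd : b ≤ d := hjrefl b d (by rw [hjd]; exact hbT.1.2)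
      rw [← hgb, ← hgD d hdD']
      exact hgmono b d hbd
    · rw [← hga, ← hgb, ← (hghom a b).2, hab, hgD ⊥ hDbot, hf0]
    · obtain ⟨l, hl, hle⟩ := hNFB aB haB.1.1
      rw [← hga, ← hle]
      exact hFle l hl a (by rw [hle]; exact haB.1.2)
    · obtain ⟨l, hl, hle⟩ := hNFB bB hbB.1.1
      rw [← hgb, ← hle]
      exact hFle l hl b (by rw [hle]; exact hbB.1.2)
  · -- (ii) → (i)
    rintro ⟨hαaT, hβbT, hαβ, hFaB, hFbB⟩
    have hαda : α ≤ f da := hαaT da hdaD hda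
    have hβdb : β ≤ f db := hβbT db hdbD hdb
    have hjab : j a ⊓ j b = ⊥ := by rw [← (hjhom a b).2, hab, hjbot]
    have hFmono : ∀ z z' : C, GBAClosure (j '' D) z → GBAClosure (j '' D) z' → z ≤ z' →
        F z ≤ F z' := by
      intro z z' hz hz' h
      have hs := (hFhom z z' hz hz').1
      rw [sup_eq_right.2 h] at hs
      rw [hs]; exact le_sup_left
    -- normal forms in E
    have hNFE : ∀ x : E, ∃ t : E × E × E,
        (t.1 ∈ D ∧ t.2.1 ∈ D ∧ t.2.2 ∈ D) ∧ (t.1 ≤ t.2.1 ∧ t.1 ≤ t.2.2) ∧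
        x = t.1 ⊔ t.2.1 ⊓ a ⊔ t.2.2 ⊓ b := by
      intro x
      induction hgenE x with
      | @base x hx =>
          simp only [Set.mem_union, Set.mem_insert_iff, Set.mem_singleton_iff] at hx
          rcases hx with hx | rfl | rfl
          · exact ⟨(x, x, x), ⟨hx, hx, hx⟩, ⟨le_rfl, le_rfl⟩,
              by rw [sup_inf_self, sup_inf_self]⟩
          · refine ⟨(⊥, ⊤, ⊥), ⟨hDbot, hDtop, hDbot⟩, ⟨bot_le, bot_le⟩, ?_⟩
            simp
          · refine ⟨(⊥, ⊥, ⊤), ⟨hDbot, hDbot, hDtop⟩, ⟨bot_le, bot_le⟩, ?_⟩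
            simp
      | @sup x y hx hy ihx ihy =>
          obtain ⟨t, htD, htm, htx⟩ := ihx
          obtain ⟨u, huD, hum, hux⟩ := ihy
          refine ⟨(t.1 ⊔ u.1, t.2.1 ⊔ u.2.1, t.2.2 ⊔ u.2.2),
            ⟨hDsup _ htD.1 _ huD.1, hDsup _ htD.2.1 _ huD.2.1, hDsup _ htD.2.2 _ huD.2.2⟩,
            ⟨sup_le_sup htm.1 hum.1, sup_le_sup htm.2 hum.2⟩, ?_⟩
          rw [htx, hux]
          exact tri_sup a b t.1 t.2.1 t.2.2 u.1 u.2.1 u.2.2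
      | @inf x y hx hy ihx ihy =>
          obtain ⟨t, htD, htm, htx⟩ := ihx
          obtain ⟨u, huD, hum, hux⟩ := ihy
          refine ⟨(t.1 ⊓ u.1, t.2.1 ⊓ u.2.1, t.2.2 ⊓ u.2.2),
            ⟨hDinf _ htD.1 _ huD.1, hDinf _ htD.2.1 _ huD.2.1, hDinf _ htD.2.2 _ huD.2.2⟩,
            ⟨inf_le_inf htm.1 hum.1, inf_le_inf htm.2 hum.2⟩, ?_⟩
          rw [htx, hux]
          exact tri_inf a b t.1 t.2.1 t.2.2 u.1 u.2.1 u.2.2 hab htm.1 htm.2 hum.1 hum.2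
    -- the general "coefficient" piece for a and b parts
    have pieceB : ∀ (c dc : E) (γ : L) (cT : C), dc ∈ D → j dc = cT →
        IsLeast {z : C | GBAClosure (j '' D) z ∧ j c ≤ z} cT → γ ≤ f dc →
        ∀ d1' ∈ D, ∀ e0' ∈ D, ∀ e1' ∈ D, d1' ⊓ c ≤ e0' ⊔ e1' →
        f d1' ⊓ γ ≤ f e0' ⊔ f e1' ⊓ γ := by
      intro c dc γ cT hdc hjdc hcT hγ d1' hd1' e0' he0' e1' he1' hlc
      have hpD : arr d1' (e0' ⊔ e1') ∈ D := harrD d1' hd1' _ (hDsup _ he0' _ he1')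
      have hcp : c ≤ arr d1' (e0' ⊔ e1') :=
        (harrG d1' hd1' _ (hDsup _ he0' _ he1')).2 hlc
      have hcTp : cT ≤ j (arr d1' (e0' ⊔ e1')) :=
        hcT.2 ⟨GBAClosure.base ⟨_, hpD, rfl⟩, hjmono _ _ hcp⟩
      have hdcp : dc ≤ arr d1' (e0' ⊔ e1') := hjrefl _ _ (by rw [hjdc]; exact hcTp)
      have hkey : d1' ⊓ dc ≤ e0' ⊔ e1' :=
        le_trans (inf_le_inf_left _ hdcp) (harrG d1' hd1' _ (hDsup _ he0' _ he1')).1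
      have hfkey : f d1' ⊓ f dc ≤ f e0' ⊔ f e1' := by
        rw [← (hfD _ hd1' _ hdc).2, ← (hfD _ he0' _ he1').1]
        exact hfmono _ (hDinf _ hd1' _ hdc) _ (hDsup _ he0' _ he1') hkey
      calc f d1' ⊓ γ ≤ (f d1' ⊓ f dc) ⊓ γ :=
            le_inf (le_inf inf_le_left (inf_le_right.trans hγ)) inf_le_right
      _ ≤ (f e0' ⊔ f e1') ⊓ γ := inf_le_inf_right _ hfkey
      _ = f e0' ⊓ γ ⊔ f e1' ⊓ γ := inf_sup_right _ _ _
      _ ≤ f e0' ⊔ f e1' ⊓ γ := sup_le_sup inf_le_left le_rfl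
    -- well-definedness / monotonicity transport
    have WD : ∀ t s : E × E × E, t.1 ∈ D → t.2.1 ∈ D → t.2.2 ∈ D →
        s.1 ∈ D → s.2.1 ∈ D → s.2.2 ∈ D →
        t.1 ⊔ t.2.1 ⊓ a ⊔ t.2.2 ⊓ b ≤ s.1 ⊔ s.2.1 ⊓ a ⊔ s.2.2 ⊓ b →
        f t.1 ⊔ f t.2.1 ⊓ α ⊔ f t.2.2 ⊓ β ≤ f s.1 ⊔ f s.2.1 ⊓ α ⊔ f s.2.2 ⊓ β := by
      rintro ⟨d0, d1, d2⟩ ⟨e0, e1, e2⟩ hd0 hd1 hd2 he0 he1 he2 hle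
      simp only at hle ⊢
      have hled0 : d0 ≤ e0 ⊔ e1 ⊓ a ⊔ e2 ⊓ b := (le_sup_left.trans le_sup_left).trans hle
      have hled1 : d1 ⊓ a ≤ e0 ⊔ e1 ⊓ a ⊔ e2 ⊓ b := (le_sup_right.trans le_sup_left).trans hle
      have hled2 : d2 ⊓ b ≤ e0 ⊔ e1 ⊓ a ⊔ e2 ⊓ b := le_sup_right.trans hle
      have hRa : (e0 ⊔ e1 ⊓ a ⊔ e2 ⊓ b) ⊓ a ≤ e0 ⊔ e1 := by
        rw [inf_sup_right, inf_sup_right]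
        refine sup_le (sup_le (inf_le_left.trans le_sup_left) ?_) ?_
        · exact (inf_le_left.trans inf_le_left).trans le_sup_right
        · refine le_trans (le_inf (inf_le_left.trans inf_le_right) inf_le_right : _ ≤ b ⊓ a) ?_
          rw [inf_comm, hab]
          exact bot_le
      have hRb : (e0 ⊔ e1 ⊓ a ⊔ e2 ⊓ b) ⊓ b ≤ e0 ⊔ e2 := by
        rw [inf_sup_right, inf_sup_right]
        refine sup_le (sup_le (inf_le_left.trans le_sup_left) ?_) ?_
        · refine le_trans (le_inf (inf_le_left.trans inf_le_right) inf_le_right : _ ≤ a ⊓ b) ?_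
          rw [hab]
          exact bot_le
        · exact (inf_le_left.trans inf_le_left).trans le_sup_right
      have fB : f d1 ⊓ α ≤ f e0 ⊔ f e1 ⊓ α :=
        pieceB a da α aT hdaD hda haT hαda d1 hd1 e0 he0 e1 he1
          ((le_inf hled1 inf_le_right).trans hRa)
      have fC : f d2 ⊓ β ≤ f e0 ⊔ f e2 ⊓ β :=
        pieceB b db β bT hdbD hdb hbT hβdb d2 hd2 e0 he0 e2 he2
          ((le_inf hled2 inf_le_right).trans hRb)
      -- piece A
      have hjd0 : j d0 ≤ j e0 ⊔ ((j e1 ⊓ j a) ⊔ (j e2 ⊓ j b)) := by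
        have h := hjmono _ _ hled0
        rw [(hjhom _ _).1, (hjhom _ _).1, (hjhom e1 a).2, (hjhom e2 b).2, sup_assoc] at h
        exact h
      have hw1 : j d0 \ j e0 ≤ (j e1 ⊓ j a) ⊔ (j e2 ⊓ j b) := sdiff_le_iff.2 hjd0
      have hwB : GBAClosure (j '' D) (j d0 \ j e0) :=
        GBAClosure.sdiff (GBAClosure.base ⟨d0, hd0, rfl⟩) (GBAClosure.base ⟨e0, he0, rfl⟩)
      have hw2 : j d0 \ j e0 ≤ j (a ⊔ b) := by
        rw [(hjhom a b).1]
        exact hw1.trans (sup_le_sup inf_le_right inf_le_right)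
      have hwab : j d0 \ j e0 ≤ aB ⊔ bB := by
        rw [← habB4]
        exact habB.2 ⟨hwB, hw2⟩
      have hsplitw : j d0 \ j e0 = (j d0 \ j e0) ⊓ aB ⊔ (j d0 \ j e0) ⊓ bB := by
        rw [← inf_sup_left, inf_eq_left.2 hwab]
      have hXa : ((j e1 ⊓ j a) ⊔ (j e2 ⊓ j b)) ⊓ j a ≤ j e1 := by
        rw [inf_sup_right]
        refine sup_le (inf_le_left.trans inf_le_left) ?_
        refine le_trans (le_inf (inf_le_left.trans inf_le_right) inf_le_right : _ ≤ j b ⊓ j a) ?_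
        rw [inf_comm, hjab]
        exact bot_le
      have hXb : ((j e1 ⊓ j a) ⊔ (j e2 ⊓ j b)) ⊓ j b ≤ j e2 := by
        rw [inf_sup_right]
        refine sup_le ?_ (inf_le_left.trans inf_le_left)
        refine le_trans (le_inf (inf_le_left.trans inf_le_right) inf_le_right : _ ≤ j a ⊓ j b) ?_
        rw [hjab]
        exact bot_le
      have hwa : (j d0 \ j e0) ⊓ aB ≤ j e1 ⊓ aB :=
        le_inf ((le_inf (inf_le_left.trans hw1) (inf_le_right.trans haB.1.2)).trans hXa)
          inf_le_right
      have hwb : (j d0 \ j e0) ⊓ bB ≤ j e2 ⊓ bB :=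
        le_inf ((le_inf (inf_le_left.trans hw1) (inf_le_right.trans hbB.1.2)).trans hXb)
          inf_le_right
      have hwaB : GBAClosure (j '' D) ((j d0 \ j e0) ⊓ aB) := GBAClosure.inf hwB haB.1.1
      have hwbB : GBAClosure (j '' D) ((j d0 \ j e0) ⊓ bB) := GBAClosure.inf hwB hbB.1.1
      have hFwa : F ((j d0 \ j e0) ⊓ aB) ≤ jL (f e1 ⊓ α) := by
        calc F ((j d0 \ j e0) ⊓ aB) ≤ F (j e1 ⊓ aB) :=
              hFmono _ _ hwaB (GBAClosure.inf (GBAClosure.base ⟨e1, he1, rfl⟩) haB.1.1) hwa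
        _ = F (j e1) ⊓ F aB := (hFhom _ _ (GBAClosure.base ⟨e1, he1, rfl⟩) haB.1.1).2.1
        _ = jL (f e1) ⊓ F aB := by rw [hFj e1 he1]
        _ ≤ jL (f e1) ⊓ jL α := inf_le_inf_left _ hFaB
        _ = jL (f e1 ⊓ α) := ((hjLhom _ _).2).symm
      have hFwb : F ((j d0 \ j e0) ⊓ bB) ≤ jL (f e2 ⊓ β) := by
        calc F ((j d0 \ j e0) ⊓ bB) ≤ F (j e2 ⊓ bB) :=
              hFmono _ _ hwbB (GBAClosure.inf (GBAClosure.base ⟨e2, he2, rfl⟩) hbB.1.1) hwb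
        _ = F (j e2) ⊓ F bB := (hFhom _ _ (GBAClosure.base ⟨e2, he2, rfl⟩) hbB.1.1).2.1
        _ = jL (f e2) ⊓ F bB := by rw [hFj e2 he2]
        _ ≤ jL (f e2) ⊓ jL β := inf_le_inf_left _ hFbB
        _ = jL (f e2 ⊓ β) := ((hjLhom _ _).2).symm
      have hFw : jL (f d0) \ jL (f e0) ≤ jL (f e1 ⊓ α ⊔ f e2 ⊓ β) := by
        have h1 : F (j d0 \ j e0) = jL (f d0) \ jL (f e0) := by
          rw [(hFhom _ _ (GBAClosure.base ⟨d0, hd0, rfl⟩) (GBAClosure.base ⟨e0, he0, rfl⟩)).2.2,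
            hFj d0 hd0, hFj e0 he0]
        have h2 : F (j d0 \ j e0) = F ((j d0 \ j e0) ⊓ aB) ⊔ F ((j d0 \ j e0) ⊓ bB) := by
          conv_lhs => rw [hsplitw]
          exact (hFhom _ _ hwaB hwbB).1
        rw [← h1, h2, (hjLhom (f e1 ⊓ α) (f e2 ⊓ β)).1]
        exact sup_le_sup hFwa hFwb
      have fA : f d0 ≤ f e0 ⊔ (f e1 ⊓ α ⊔ f e2 ⊓ β) := by
        apply hjLrefl
        rw [(hjLhom _ _).1]
        exact sdiff_le_iff.1 hFw
      refine sup_le (sup_le ?_ ?_) ?_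
      · rw [← sup_assoc] at fA
        exact fA
      · exact fB.trans (sup_le_sup le_rfl le_rfl |>.trans
          (sup_le (le_sup_left.trans le_sup_left) (le_sup_right.trans le_sup_left)))
      · exact fC.trans (sup_le (le_sup_left.trans le_sup_left) le_sup_right)
    choose r hrD hrm hrx using hNFE
    have WDeq : ∀ (x : E) (s : E × E × E), s.1 ∈ D → s.2.1 ∈ D → s.2.2 ∈ D →
        x = s.1 ⊔ s.2.1 ⊓ a ⊔ s.2.2 ⊓ b →
        f (r x).1 ⊔ f (r x).2.1 ⊓ α ⊔ f (r x).2.2 ⊓ β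
          = f s.1 ⊔ f s.2.1 ⊓ α ⊔ f s.2.2 ⊓ β := by
      intro x s hs0 hs1 hs2 hxs
      exact le_antisymm
        (WD (r x) s (hrD x).1 (hrD x).2.1 (hrD x).2.2 hs0 hs1 hs2
          (le_of_eq ((hrx x).symm.trans hxs)))
        (WD s (r x) hs0 hs1 hs2 (hrD x).1 (hrD x).2.1 (hrD x).2.2
          (le_of_eq (hxs.symm.trans (hrx x))))
    refine ⟨fun x => f (r x).1 ⊔ f (r x).2.1 ⊓ α ⊔ f (r x).2.2 ⊓ β,
      fun x y => ⟨?_, ?_⟩, fun x hx => ?_, ?_, ?_⟩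
    · have e1 := WDeq (x ⊔ y)
        ((r x).1 ⊔ (r y).1, (r x).2.1 ⊔ (r y).2.1, (r x).2.2 ⊔ (r y).2.2)
        (hDsup _ (hrD x).1 _ (hrD y).1) (hDsup _ (hrD x).2.1 _ (hrD y).2.1)
        (hDsup _ (hrD x).2.2 _ (hrD y).2.2)
        (by conv_lhs => rw [hrx x, hrx y]
            exact tri_sup a b (r x).1 (r x).2.1 (r x).2.2 (r y).1 (r y).2.1 (r y).2.2)
      beta_reduce
      rw [e1, (hfD _ (hrD x).1 _ (hrD y).1).1, (hfD _ (hrD x).2.1 _ (hrD y).2.1).1,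
        (hfD _ (hrD x).2.2 _ (hrD y).2.2).1]
      exact (tri_sup α β (f (r x).1) (f (r x).2.1) (f (r x).2.2)
        (f (r y).1) (f (r y).2.1) (f (r y).2.2)).symm
    · have e1 := WDeq (x ⊓ y)
        ((r x).1 ⊓ (r y).1, (r x).2.1 ⊓ (r y).2.1, (r x).2.2 ⊓ (r y).2.2)
        (hDinf _ (hrD x).1 _ (hrD y).1) (hDinf _ (hrD x).2.1 _ (hrD y).2.1)
        (hDinf _ (hrD x).2.2 _ (hrD y).2.2)
        (by conv_lhs => rw [hrx x, hrx y]
            exact tri_inf a b (r x).1 (r x).2.1 (r x).2.2 (r y).1 (r y).2.1 (r y).2.2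
              hab (hrm x).1 (hrm x).2 (hrm y).1 (hrm y).2)
      beta_reduce
      rw [e1, (hfD _ (hrD x).1 _ (hrD y).1).2, (hfD _ (hrD x).2.1 _ (hrD y).2.1).2,
        (hfD _ (hrD x).2.2 _ (hrD y).2.2).2]
      exact (tri_inf α β (f (r x).1) (f (r x).2.1) (f (r x).2.2)
        (f (r y).1) (f (r y).2.1) (f (r y).2.2) hαβ
        (hfmono _ (hrD x).1 _ (hrD x).2.1 (hrm x).1)
        (hfmono _ (hrD x).1 _ (hrD x).2.2 (hrm x).2)
        (hfmono _ (hrD y).1 _ (hrD y).2.1 (hrm y).1)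
        (hfmono _ (hrD y).1 _ (hrD y).2.2 (hrm y).2)).symm
    · have e1 := WDeq x (x, x, x) hx hx hx (by rw [sup_inf_self, sup_inf_self])
      beta_reduce
      rw [e1, sup_inf_self, sup_inf_self]
    · have e1 := WDeq a (⊥, ⊤, ⊥) hDbot hDtop hDbot (by simp)
      have hα : f ⊤ ⊓ α = α := inf_eq_right.2 (hαda.trans (hfmono da hdaD ⊤ hDtop le_top))
      beta_reduce
      rw [e1, hf0, hα]
      simp
    · have e1 := WDeq b (⊥, ⊥, ⊤) hDbot hDbot hDtop (by simp)
      have hβ : f ⊤ ⊓ β = β := inf_eq_right.2 (hβdb.trans (hfmono db hdbD ⊤ hDtop le_top))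
      beta_reduce
      rw [e1, hf0, hβ]
      simp
end

section
/- Let D be a finite distributive lattice, L a distributive lattice with least element 0, f : D → L a join-homomorphism, and e⃗ = (e_p)_{p ∈ Ji(D)} a consonance kernel for f. Then f(x) = f(x ∧ y) ∨ (x ⊘_{e⃗} y) for all x, y ∈ D. Moreover, f is a lattice homomorphism. -/
open scoped Classical in
/-- `x ⊘_e y := ⋁ {e p : p join-irreducible, p ≤ x, p ≰ y}` (a finite join in `L`). -/
noncomputable def oslash {D L : Type*} [Lattice D] [Fintype D]
    [SemilatticeSup L] [OrderBot L] (e : D → L) (x y : D) : L :=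
  (Finset.univ.filter fun p : D => SupIrred p ∧ p ≤ x ∧ ¬ p ≤ y).sup e

/-- if `e` is a consonance kernel for the join-homomorphism `f`, then
`f x = f (x ⊓ y) ⊔ (x ⊘_e y)` for all `x, y`, and moreover `f` is a lattice homomorphism.
Here `pstar p` is the unique lower cover `p_*` of a join-irreducible `p`, characterized as
the greatest element strictly below `p`. -/
theorem stmt8 {D L : Type*} [DistribLattice D] [OrderBot D] [Fintype D]
    [DistribLattice L] [OrderBot L]
    (f : D → L) (hf : ∀ x y : D, f (x ⊔ y) = f x ⊔ f y)
    (pstar : D → D) (hpstar : ∀ p : D, SupIrred p → IsGreatest {x : D | x < p} (pstar p))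
    (e : D → L)
    (hker1 : ∀ p : D, SupIrred p → f p = f (pstar p) ⊔ e p)
    (hker2 : ∀ p q : D, SupIrred p → SupIrred q → ¬ p ≤ q → ¬ q ≤ p → e p ⊓ e q = ⊥) :
    (∀ x y : D, f x = f (x ⊓ y) ⊔ oslash e x y) ∧
    (∀ x y : D, f (x ⊓ y) = f x ⊓ f y) := by
  classical
  have fmono : Monotone f := by
    intro a b hab
    have h : f b = f a ⊔ f b := by rw [← hf, sup_eq_right.2 hab]
    exact h ▸ le_sup_left
  have hef : ∀ p : D, SupIrred p → e p ≤ f p := fun p hp => (hker1 p hp) ▸ le_sup_right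
  have main : ∀ x y : D, f x = f (x ⊓ y) ⊔ oslash e x y := by
    intro x y
    apply le_antisymm
    · have key : ∀ z : D, z ≤ x → f z ≤ f (x ⊓ y) ⊔ oslash e x y := by
        intro z
        induction z using WellFoundedLT.induction with
        | _ z ih =>
          intro hzx
          by_cases hzy : z ≤ y
          · exact le_sup_left.trans' (fmono (le_inf hzx hzy))
          by_cases hirr : SupIrred z
          · have hps := hpstar z hirr
            have hlt : pstar z < z := hps.1
            have h1 : f (pstar z) ≤ f (x ⊓ y) ⊔ oslash e x y :=
              ih _ hlt (hlt.le.trans hzx)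
            have h2 : e z ≤ oslash e x y := by
              apply Finset.le_sup
              simp [hirr, hzx, hzy]
            calc f z = f (pstar z) ⊔ e z := hker1 z hirr
              _ ≤ _ := sup_le h1 (h2.trans le_sup_right)
          · by_cases hmin : IsMin z
            · have hz : z = ⊥ := hmin.eq_bot
              subst hz
              exact le_sup_left.trans' (fmono bot_le)
            · obtain ⟨b, c, hbc, hb, hc⟩ : ∃ b c, b ⊔ c = z ∧ b ≠ z ∧ c ≠ z := by
                by_contra h
                push_neg at h
                exact hirr ⟨hmin, fun b c hbc =>
                  or_iff_not_imp_left.2 fun hb => h b c hbc hb⟩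
              have hbz : b < z := lt_of_le_of_ne (hbc ▸ le_sup_left) hb
              have hcz : c < z := lt_of_le_of_ne (hbc ▸ le_sup_right) hc
              have : f z = f b ⊔ f c := by rw [← hbc, hf]
              rw [this]
              exact sup_le (ih b hbz (hbz.le.trans hzx)) (ih c hcz (hcz.le.trans hzx))
      exact key x le_rfl
    · refine sup_le (fmono inf_le_left) (Finset.sup_le fun p hp => ?_)
      simp only [Finset.mem_filter, Finset.mem_univ, true_and] at hp
      exact (hef p hp.1).trans (fmono hp.2.1)
  refine ⟨main, fun x y => ?_⟩
  apply le_antisymm (le_inf (fmono inf_le_left) (fmono inf_le_right))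
  have hbot : oslash e x y ⊓ oslash e y x = ⊥ := by
    apply le_antisymm _ bot_le
    rw [oslash, Finset.sup_inf_distrib_right]
    refine Finset.sup_le fun p hp => ?_
    simp only [Finset.mem_filter, Finset.mem_univ, true_and] at hp
    rw [oslash, Finset.sup_inf_distrib_left]
    refine Finset.sup_le fun q hq => ?_
    simp only [Finset.mem_filter, Finset.mem_univ, true_and] at hq
    exact le_of_eq (hker2 p q hp.1 hq.1
      (fun h => hp.2.2 (h.trans hq.2.1)) (fun h => hq.2.2 (h.trans hp.2.1)))
  calc f x ⊓ f y = (f (x ⊓ y) ⊔ oslash e x y) ⊓ (f (x ⊓ y) ⊔ oslash e y x) := by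
        rw [main x y, main y x, inf_comm y x]
    _ = f (x ⊓ y) ⊔ (oslash e x y ⊓ oslash e y x) := (sup_inf_left _ _ _).symm
    _ ≤ f (x ⊓ y) := by rw [hbot, sup_bot_eq]
end

section
/- Let D be a finite distributive lattice, L a distributive lattice with least element 0, and f : D → L a lattice homomorphism. Then f has a consonance kernel if and only if the range of f is consonant in L. -/
open Finset


/-- a lattice homomorphism `f : D → L` from a finite distributive lattice `D`
to a distributive lattice `L` with least element `⊥` has a consonance kernel iff the range
of `f` is consonant in `L`.  Here `pstar p` denotes the unique lower cover `p_*` of a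
join-irreducible `p`, characterized as the greatest element strictly below `p`. -/
theorem stmt9 {D L : Type*} [DistribLattice D] [OrderBot D] [Fintype D]
    [DistribLattice L] [OrderBot L]
    (f : D → L)
    (hf : ∀ x y : D, f (x ⊔ y) = f x ⊔ f y ∧ f (x ⊓ y) = f x ⊓ f y)
    (pstar : D → D) (hpstar : ∀ p : D, SupIrred p → IsGreatest {x : D | x < p} (pstar p)) :
    (∃ e : D → L, (∀ p : D, SupIrred p → f p = f (pstar p) ⊔ e p) ∧
        (∀ p q : D, SupIrred p → SupIrred q → ¬ p ≤ q → ¬ q ≤ p → e p ⊓ e q = ⊥)) ↔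
      (∀ a ∈ Set.range f, ∀ b ∈ Set.range f,
        ∃ u v : L, a ≤ u ⊔ b ∧ b ≤ a ⊔ v ∧ u ⊓ v = ⊥) := by
  classical
  have hmono : Monotone f := by
    intro x y hxy
    have h := (hf x y).2
    rw [inf_eq_left.2 hxy] at h
    rw [h]; exact inf_le_right
  have hwf : WellFounded ((· < ·) : D → D → Prop) := (Finite.to_wellFoundedLT).wf
  constructor
  · rintro ⟨e, he1, he2⟩ a ⟨x, rfl⟩ b ⟨y, rfl⟩
    set u := (univ.filter fun p => SupIrred p ∧ p ≤ x ∧ ¬ p ≤ y).sup e with hu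
    set v := (univ.filter fun p => SupIrred p ∧ p ≤ y ∧ ¬ p ≤ x).sup e with hv
    have key : ∀ (s t : D) (w : L),
        (∀ p, SupIrred p → p ≤ s → ¬ p ≤ t → e p ≤ w) →
        ∀ z, z ≤ s → f z ≤ w ⊔ f t := by
      intro s t w hw z
      induction z using hwf.induction with
      | _ z ih =>
        intro hzs
        by_cases hzt : z ≤ t
        · exact le_sup_of_le_right (hmono hzt)
        by_cases hzi : SupIrred z
        · have hlt : pstar z < z := (hpstar z hzi).1
          have h1 : f (pstar z) ≤ w ⊔ f t := ih _ hlt (hlt.le.trans hzs)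
          have h2 : e z ≤ w := hw z hzi hzs hzt
          calc f z = f (pstar z) ⊔ e z := he1 z hzi
            _ ≤ (w ⊔ f t) ⊔ w := sup_le_sup h1 h2
            _ ≤ w ⊔ f t := by simp
        · rw [SupIrred] at hzi
          push_neg at hzi
          by_cases hmin : IsMin z
          · exact absurd (hmin.eq_bot.le.trans bot_le) hzt
          obtain ⟨b, c, hbc, hb, hc⟩ := hzi hmin
          have hb' : b < z := lt_of_le_of_ne (hbc ▸ le_sup_left) hb
          have hc' : c < z := lt_of_le_of_ne (hbc ▸ le_sup_right) hc
          have := (hf b c).1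
          rw [hbc] at this
          rw [this]
          exact sup_le (ih b hb' (hb'.le.trans hzs)) (ih c hc' (hc'.le.trans hzs))
    refine ⟨u, v, key x y u (fun p hp h1 h2 => Finset.le_sup (by simp [hp, h1, h2])) x le_rfl,
      by rw [sup_comm]; exact key y x v (fun p hp h1 h2 => Finset.le_sup (by simp [hp, h1, h2])) y le_rfl, ?_⟩
    rw [hu, Finset.sup_inf_distrib_right]
    rw [Finset.sup_eq_bot_iff]  -- maybe name differs
    intro p hp
    simp only [mem_filter, mem_univ, true_and] at hp
    rw [hv, Finset.sup_inf_distrib_left, Finset.sup_eq_bot_iff]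
    intro q hq
    simp only [mem_filter, mem_univ, true_and] at hq
    exact he2 p q hp.1 hq.1 (fun h => hp.2.2 (h.trans hq.2.1)) (fun h => hq.2.2 (h.trans hp.2.1))
  · intro hcons
    choose u v hu hv huv using fun p q : D => hcons (f p) ⟨p, rfl⟩ (f q) ⟨q, rfl⟩
    set s : D → Finset D := fun p => univ.filter fun q => SupIrred q ∧ ¬ p ≤ q ∧ ¬ q ≤ p with hs
    set g : D → D → L := fun p q => u p q ⊓ v q p with hg
    set e : D → L := fun p =>
      if h : (s p).Nonempty then f p ⊓ (s p).inf' h (g p) else f p with he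
    have hele : ∀ p, e p ≤ f p := by
      intro p; rw [he]; dsimp only
      split
      · exact inf_le_left
      · exact le_rfl
    refine ⟨e, ?_, ?_⟩
    · intro p hp
      have hlt : pstar p < p := (hpstar p hp).1
      have hps : f (pstar p) ≤ f p := hmono hlt.le
      refine le_antisymm ?_ (sup_le hps (hele p))
      -- key: for each q incomparable, f p ≤ f (pstar p) ⊔ g p q
      have hkey : ∀ q ∈ s p, f p ≤ f (pstar p) ⊔ g p q := by
        intro q hq
        simp only [hs, mem_filter, mem_univ, true_and] at hq
        obtain ⟨hqi, hpq, hqp⟩ := hq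
        have hmeet : p ⊓ q ≤ pstar p := by
          refine (hpstar p hp).2 ?_
          exact lt_of_le_of_ne inf_le_left (fun h => hpq (h ▸ inf_le_right))
        have hfmeet : f p ⊓ f q ≤ f (pstar p) := (hf p q).2 ▸ hmono hmeet
        have h1 : f p ≤ f (pstar p) ⊔ u p q := by
          have := hu p q
          calc f p = f p ⊓ (u p q ⊔ f q) := (inf_eq_left.2 this).symm
            _ = (f p ⊓ u p q) ⊔ (f p ⊓ f q) := inf_sup_left _ _ _
            _ ≤ u p q ⊔ f (pstar p) := sup_le_sup inf_le_right hfmeet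
            _ = f (pstar p) ⊔ u p q := sup_comm _ _
        have h2 : f p ≤ f (pstar p) ⊔ v q p := by
          have := hv q p
          calc f p = f p ⊓ (f q ⊔ v q p) := (inf_eq_left.2 this).symm
            _ = (f p ⊓ f q) ⊔ (f p ⊓ v q p) := inf_sup_left _ _ _
            _ ≤ f (pstar p) ⊔ v q p := sup_le_sup hfmeet inf_le_right
        calc f p ≤ (f (pstar p) ⊔ u p q) ⊓ (f (pstar p) ⊔ v q p) := le_inf h1 h2
          _ = f (pstar p) ⊔ (u p q ⊓ v q p) := (sup_inf_left _ _ _).symm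
      rw [he]; dsimp only
      split
      · rename_i hne
        rw [sup_inf_left]
        refine le_inf (le_sup_of_le_right le_rfl) ?_
        rw [Finset.inf'_sup_distrib_left]
        exact Finset.le_inf' _ _ fun q hq => hkey q hq
      · exact le_sup_right
    · intro p q hp hq hpq hqp
      have hqs : q ∈ s p := by simp [hs, hq, hpq, hqp]
      have hps : p ∈ s q := by simp [hs, hp, hpq, hqp]
      have h1 : e p ≤ u p q := by
        rw [he]; dsimp only
        rw [dif_pos ⟨q, hqs⟩]
        exact le_trans inf_le_right (le_trans (Finset.inf'_le _ hqs) inf_le_left)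
      have h2 : e q ≤ v p q := by
        rw [he]; dsimp only
        rw [dif_pos ⟨p, hps⟩]
        exact le_trans inf_le_right (le_trans (Finset.inf'_le _ hps) inf_le_right)
      exact le_bot_iff.1 ((inf_le_inf h1 h2).trans (huv p q).le)
end

section
/- Let D be a finite semi-Heyting sublattice of a bounded distributive lattice E, let f : D → L be a 0-lattice homomorphism into a distributive 0-lattice L, and let a, b ∈ E with a ∧ b = 0. Then any join-irreducible elements p, q of D satisfying p ≤ p_* ∨ a and q ≤ q_* ∨ b are incomparable. In particular, for any consonance kernel e⃗ of f, setting f_{e⃗}(c) := ⋁{e_p : p ∈ Ji(D), p ≤ p_* ∨ c}, one has f_{e⃗}(a) ∧ f_{e⃗}(b) = 0. -/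
/-- The set of join-irreducible elements of a sublattice `S` (viewed as a subset). -/
def JiSet {E : Type*} [Lattice E] [OrderBot E] (S : Set E) : Set E :=
  {p | p ∈ S ∧ p ≠ ⊥ ∧ ∀ x ∈ S, ∀ y ∈ S, p = x ⊔ y → p = x ∨ p = y}

/-- Helper: a finite LUB meets to `⊥` if all its members do. -/
lemma aux_isLUB_inf_bot {L : Type*} [DistribLattice L] [OrderBot L]
    {S : Set L} (hS : S.Finite) {u c : L} (h : IsLUB S u)
    (hc : ∀ y ∈ S, y ⊓ c = ⊥) : u ⊓ c = ⊥ := by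
  have hu : u = hS.toFinset.sup id := by
    apply le_antisymm
    · exact h.2 fun y hy => Finset.le_sup (f := id) (hS.mem_toFinset.2 hy)
    · exact Finset.sup_le fun y hy => h.1 (hS.mem_toFinset.1 hy)
  rw [hu, Finset.sup_inf_distrib_right]
  apply le_bot_iff.1
  exact Finset.sup_le fun y hy => le_of_eq (hc y (hS.mem_toFinset.1 hy))

/-- Helper: the core asymmetric incomparability argument. -/
lemma aux_not_le {E : Type*} [DistribLattice E] [BoundedOrder E]
    (D : Set E)
    (hDinf : ∀ x ∈ D, ∀ y ∈ D, x ⊓ y ∈ D)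
    (hSH : ∀ x ∈ D, ∀ y ∈ D, ∃ z ∈ D, IsGreatest {w : E | x ⊓ w ≤ y} z)
    (a b : E) (hab : a ⊓ b = ⊥)
    (pstar : E → E)
    (hpstar : ∀ p ∈ JiSet D, IsGreatest {w : E | w ∈ D ∧ w < p} (pstar p))
    {p q : E} (hp : p ∈ JiSet D) (hq : q ∈ JiSet D)
    (hpa : p ≤ pstar p ⊔ a) (hqb : q ≤ pstar q ⊔ b) : ¬ p ≤ q := by
  intro hpq
  have hps := hpstar p hp
  have hqs := hpstar q hq
  -- step 1 : p ⊓ b ≤ pstar p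
  have step1 : p ⊓ b ≤ pstar p := by
    calc p ⊓ b ≤ (pstar p ⊔ a) ⊓ b := inf_le_inf_right _ hpa
    _ = pstar p ⊓ b ⊔ a ⊓ b := inf_sup_right _ _ _
    _ = pstar p ⊓ b ⊔ ⊥ := by rw [hab]
    _ ≤ pstar p := by simp
  -- semi-Heyting element z = p →_E pstar p
  obtain ⟨z, hzD, hz⟩ := hSH p hp.1 (pstar p) hps.1.1
  have hbz : b ≤ z := hz.2 step1
  -- q = pstar q ⊔ (q ⊓ z)
  have hq_eq : q = pstar q ⊔ q ⊓ z := by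
    apply le_antisymm
    · have h1 : q ≤ q ⊓ (pstar q ⊔ z) :=
        le_inf le_rfl (hqb.trans (sup_le_sup_left hbz _))
      calc q ≤ q ⊓ (pstar q ⊔ z) := h1
      _ = q ⊓ pstar q ⊔ q ⊓ z := inf_sup_left _ _ _
      _ = pstar q ⊔ q ⊓ z := by rw [inf_eq_right.2 hqs.1.2.le]
    · exact sup_le hqs.1.2.le inf_le_left
  rcases hq.2.2 (pstar q) hqs.1.1 (q ⊓ z) (hDinf q hq.1 z hzD) hq_eq with h | h
  · exact absurd h.symm (ne_of_lt hqs.1.2)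
  · -- q ≤ z, so p ≤ z, so p ≤ pstar p, contradiction
    have hqz : q ≤ z := h.le.trans inf_le_right
    have hppz : p ≤ pstar p := by
      have : p ⊓ z = p := inf_eq_left.2 (hpq.trans hqz)
      calc p = p ⊓ z := this.symm
      _ ≤ pstar p := hz.1
    exact absurd hppz (not_le_of_gt hps.1.2)

/-- let `D` be a finite semi-Heyting `0,1`-sublattice of a bounded
distributive lattice `E` (i.e. for `x, y ∈ D` the Heyting implication `x →_E y` exists
and lies in `D`), let `f : D → L` be a `0`-lattice homomorphism (given as a map on `E`
whose restriction to `D` is a `0`-lattice homomorphism), and let `a, b ∈ E` with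
`a ⊓ b = ⊥`.  Then any join-irreducible `p, q` of `D` with `p ≤ p_* ⊔ a` and
`q ≤ q_* ⊔ b` are incomparable; in particular for any consonance kernel `e` of `f↾D`,
`f_e(a) ⊓ f_e(b) = ⊥`, where `f_e(c) = ⋁ {e p : p ∈ Ji(D), p ≤ p_* ⊔ c}` is expressed
as a least upper bound.  Here `pstar p` is the unique lower cover `p_*` of `p` in `D`. -/
theorem stmt10 {E L : Type*} [DistribLattice E] [BoundedOrder E]
    [DistribLattice L] [OrderBot L]
    (D : Set E) (hDfin : D.Finite) (hDbot : ⊥ ∈ D) (hDtop : ⊤ ∈ D)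
    (hDsup : ∀ x ∈ D, ∀ y ∈ D, x ⊔ y ∈ D) (hDinf : ∀ x ∈ D, ∀ y ∈ D, x ⊓ y ∈ D)
    (hSH : ∀ x ∈ D, ∀ y ∈ D, ∃ z ∈ D, IsGreatest {w : E | x ⊓ w ≤ y} z)
    (f : E → L)
    (hfD : ∀ x ∈ D, ∀ y ∈ D, f (x ⊔ y) = f x ⊔ f y ∧ f (x ⊓ y) = f x ⊓ f y)
    (hf0 : f ⊥ = ⊥)
    (a b : E) (hab : a ⊓ b = ⊥)
    (pstar : E → E)
    (hpstar : ∀ p ∈ JiSet D, IsGreatest {w : E | w ∈ D ∧ w < p} (pstar p)) :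
    (∀ p ∈ JiSet D, ∀ q ∈ JiSet D,
      p ≤ pstar p ⊔ a → q ≤ pstar q ⊔ b → ¬ p ≤ q ∧ ¬ q ≤ p) ∧
    (∀ e : E → L,
      (∀ p ∈ JiSet D, f p = f (pstar p) ⊔ e p) →
      (∀ p ∈ JiSet D, ∀ q ∈ JiSet D, ¬ p ≤ q → ¬ q ≤ p → e p ⊓ e q = ⊥) →
      ∀ α β : L,
        IsLUB {x : L | ∃ p ∈ JiSet D, p ≤ pstar p ⊔ a ∧ x = e p} α →
        IsLUB {x : L | ∃ p ∈ JiSet D, p ≤ pstar p ⊔ b ∧ x = e p} β →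
        α ⊓ β = ⊥) := by
  have hab' : b ⊓ a = ⊥ := by rw [inf_comm]; exact hab
  have incomp : ∀ p ∈ JiSet D, ∀ q ∈ JiSet D,
      p ≤ pstar p ⊔ a → q ≤ pstar q ⊔ b → ¬ p ≤ q ∧ ¬ q ≤ p := by
    intro p hp q hq hpa hqb
    exact ⟨aux_not_le D hDinf hSH a b hab pstar hpstar hp hq hpa hqb,
           aux_not_le D hDinf hSH b a hab' pstar hpstar hq hp hqb hpa⟩
  refine ⟨incomp, ?_⟩
  intro e _ hker α β hα hβ
  set Sa := {x : L | ∃ p ∈ JiSet D, p ≤ pstar p ⊔ a ∧ x = e p} with hSa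
  set Sb := {x : L | ∃ p ∈ JiSet D, p ≤ pstar p ⊔ b ∧ x = e p} with hSb
  have hfinA : Sa.Finite := by
    apply (hDfin.image e).subset
    rintro x ⟨p, hp, _, rfl⟩
    exact ⟨p, hp.1, rfl⟩
  have hfinB : Sb.Finite := by
    apply (hDfin.image e).subset
    rintro x ⟨p, hp, _, rfl⟩
    exact ⟨p, hp.1, rfl⟩
  have key : ∀ x ∈ Sa, ∀ y ∈ Sb, x ⊓ y = ⊥ := by
    rintro x ⟨p, hp, hpa, rfl⟩ y ⟨q, hq, hqb, rfl⟩
    obtain ⟨h1, h2⟩ := incomp p hp q hq hpa hqb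
    exact hker p hp q hq h1 h2
  -- for each y ∈ Sb, α ⊓ y = ⊥
  have hαy : ∀ y ∈ Sb, y ⊓ α = ⊥ := by
    intro y hy
    rw [inf_comm]
    exact aux_isLUB_inf_bot hfinA hα fun x hx => key x hx y hy
  rw [inf_comm]
  exact aux_isLUB_inf_bot hfinB hβ hαy
end

section
/- Let k be a totally ordered division ring, let Ω be a convex subset of a right k-vector space E, and let F ∪ {a} be a set of affine functionals on E. Set A⁺ := {x ∈ Ω : a(x) > 0} and A⁻ := {x ∈ Ω : a(x) < 0}. Then for every U ∈ Bool(F, Ω), if U ⊆ A⁺ ∪ A⁻, there exist U⁺, U⁻ ∈ Bool(F, Ω) such that U = U⁺ ∪ U⁻, U⁺ ⊆ A⁺, and U⁻ ⊆ A⁻. -/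
set_option linter.unusedSectionVars false


/-- An affine functional on a right `k`-vector space `E`: a map `f : E → k` such that
`f - f 0` is a linear functional (additive, and `(f - f 0)(x · c) = (f - f 0)(x) * c`). -/
def IsAffineFunctional (k : Type*) [DivisionRing k] (E : Type*) [AddCommGroup E]
    [Module kᵐᵒᵖ E] (f : E → k) : Prop :=
  (∀ x y : E, f (x + y) - f 0 = (f x - f 0) + (f y - f 0)) ∧
  (∀ (c : k) (x : E), f (MulOpposite.op c • x) - f 0 = (f x - f 0) * c)

/-- A convex subset of a right `k`-vector space. -/
def IsConvexSet (k : Type*) [DivisionRing k] [LinearOrder k] (E : Type*) [AddCommGroup E]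
    [Module kᵐᵒᵖ E] (Ω : Set E) : Prop :=
  ∀ x ∈ Ω, ∀ y ∈ Ω, ∀ lam mu : k, 0 ≤ lam → 0 ≤ mu → lam + mu = 1 →
    MulOpposite.op lam • x + MulOpposite.op mu • y ∈ Ω

/-- Membership in `Bool(F, Ω)`: the Boolean subalgebra of the powerset of `Ω` generated
by the sets `⟦f > 0⟧ = {x ∈ Ω : f x > 0}` and `⟦f < 0⟧` for `f ∈ F`. -/
inductive MemBoolF {k E : Type*} [DivisionRing k] [LinearOrder k]
    (F : Set (E → k)) (Ω : Set E) : Set E → Prop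
  | pos (f : E → k) (hf : f ∈ F) : MemBoolF F Ω {x ∈ Ω | 0 < f x}
  | neg (f : E → k) (hf : f ∈ F) : MemBoolF F Ω {x ∈ Ω | f x < 0}
  | empty : MemBoolF F Ω ∅
  | full : MemBoolF F Ω Ω
  | union {U V : Set E} : MemBoolF F Ω U → MemBoolF F Ω V → MemBoolF F Ω (U ∪ V)
  | inter {U V : Set E} : MemBoolF F Ω U → MemBoolF F Ω V → MemBoolF F Ω (U ∩ V)
  | sdiff {U V : Set E} : MemBoolF F Ω U → MemBoolF F Ω V → MemBoolF F Ω (U \ V)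

section Aux

variable {k : Type*} [DivisionRing k] [LinearOrder k]
    [CovariantClass k k (· + ·) (· < ·)] [PosMulStrictMono k] [MulPosStrictMono k]
    {E : Type*} [AddCommGroup E] [Module kᵐᵒᵖ E]

lemma aux_one_pos : (0 : k) < 1 := by
  rcases lt_trichotomy (0 : k) 1 with h | h | h
  · exact h
  · exact absurd h.symm one_ne_zero
  · exfalso
    have hneg : (0 : k) < -1 := by
      have := add_lt_add_left h (-1)
      simpa using this
    have := mul_lt_mul_of_pos_right h hneg
    simp only [one_mul, zero_mul] at this
    exact absurd hneg (not_lt.mpr this.le)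

lemma aux_inv_pos {c : k} (hc : 0 < c) : 0 < c⁻¹ := by
  rcases lt_trichotomy (0 : k) c⁻¹ with h | h | h
  · exact h
  · exfalso
    have : c * c⁻¹ = 1 := mul_inv_cancel₀ hc.ne'
    rw [← h, mul_zero] at this
    exact one_ne_zero this.symm
  · exfalso
    have := mul_lt_mul_of_pos_left h hc
    rw [mul_zero, mul_inv_cancel₀ hc.ne'] at this
    exact absurd aux_one_pos (not_lt.mpr this.le)

lemma aux_add_pos {a b : k} (ha : 0 < a) (hb : 0 ≤ b) : 0 < a + b := by
  rcases hb.eq_or_lt with h | h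
  · rw [← h, add_zero]; exact ha
  · calc (0 : k) < a := ha
      _ = a + 0 := (add_zero a).symm
      _ < a + b := add_lt_add_right h a

lemma aux_mul_nonneg {a b : k} (ha : 0 ≤ a) (hb : 0 ≤ b) : 0 ≤ a * b := by
  rcases ha.eq_or_lt with h | h
  · rw [← h, zero_mul]
  · rcases hb.eq_or_lt with h' | h'
    · rw [← h', mul_zero]
    · exact (mul_pos h h').le

lemma aux_comb_pos {p q lam mu : k} (hp : 0 < p) (hq : 0 < q)
    (hlam : 0 ≤ lam) (hmu : 0 ≤ mu) (hsum : lam + mu = 1) :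
    0 < p * lam + q * mu := by
  rcases hlam.eq_or_lt with h | h
  · have hmu1 : mu = 1 := by rw [← h, zero_add] at hsum; exact hsum
    rw [← h, mul_zero, zero_add, hmu1, mul_one]; exact hq
  · exact aux_add_pos (mul_pos hp h) (aux_mul_nonneg hq.le hmu)

lemma aux_comb_neg {p q lam mu : k} (hp : p < 0) (hq : q < 0)
    (hlam : 0 ≤ lam) (hmu : 0 ≤ mu) (hsum : lam + mu = 1) :
    p * lam + q * mu < 0 := by
  have := aux_comb_pos (neg_pos.mpr hp) (neg_pos.mpr hq) hlam hmu hsum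
  rw [neg_mul, neg_mul, ← neg_add] at this
  exact neg_pos.mp this

/-- The fundamental affine-combination formula. -/
lemma affine_comb {f : E → k} (hf : IsAffineFunctional k E f) (x y : E) {lam mu : k}
    (hsum : lam + mu = 1) :
    f (MulOpposite.op lam • x + MulOpposite.op mu • y) = f x * lam + f y * mu := by
  obtain ⟨h1, h2⟩ := hf
  have key := h1 (MulOpposite.op lam • x) (MulOpposite.op mu • y)
  rw [h2 lam x, h2 mu y] at key
  have h0 : f 0 * lam + f 0 * mu = f 0 := by rw [← mul_add, hsum, mul_one]
  have h4 : f (MulOpposite.op lam • x + MulOpposite.op mu • y) - f 0 =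
      (f x * lam + f y * mu) - (f 0 * lam + f 0 * mu) := by
    rw [key, sub_mul, sub_mul]; abel
  rw [h0] at h4
  exact sub_left_inj.mp h4

lemma stmt11_convex_pos {Ω : Set E} (hΩ : IsConvexSet k E Ω) {f : E → k}
    (hf : IsAffineFunctional k E f) : IsConvexSet k E {x ∈ Ω | 0 < f x} := by
  rintro x ⟨hxΩ, hx⟩ y ⟨hyΩ, hy⟩ lam mu hlam hmu hsum
  refine ⟨hΩ x hxΩ y hyΩ lam mu hlam hmu hsum, ?_⟩
  rw [affine_comb hf x y hsum]
  exact aux_comb_pos hx hy hlam hmu hsum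

lemma stmt11_convex_neg {Ω : Set E} (hΩ : IsConvexSet k E Ω) {f : E → k}
    (hf : IsAffineFunctional k E f) : IsConvexSet k E {x ∈ Ω | f x < 0} := by
  rintro x ⟨hxΩ, hx⟩ y ⟨hyΩ, hy⟩ lam mu hlam hmu hsum
  refine ⟨hΩ x hxΩ y hyΩ lam mu hlam hmu hsum, ?_⟩
  rw [affine_comb hf x y hsum]
  exact aux_comb_neg hx hy hlam hmu hsum

lemma stmt11_convex_zero {Ω : Set E} (hΩ : IsConvexSet k E Ω) {f : E → k}
    (hf : IsAffineFunctional k E f) : IsConvexSet k E {x ∈ Ω | f x = 0} := by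
  rintro x ⟨hxΩ, hx⟩ y ⟨hyΩ, hy⟩ lam mu hlam hmu hsum
  refine ⟨hΩ x hxΩ y hyΩ lam mu hlam hmu hsum, ?_⟩
  rw [affine_comb hf x y hsum, hx, hy, zero_mul, zero_mul, add_zero]

lemma stmt11_convex_inter {C D : Set E} (hC : IsConvexSet k E C) (hD : IsConvexSet k E D) :
    IsConvexSet k E (C ∩ D) := by
  rintro x ⟨hx1, hx2⟩ y ⟨hy1, hy2⟩ lam mu hlam hmu hsum
  exact ⟨hC x hx1 y hy1 lam mu hlam hmu hsum, hD x hx2 y hy2 lam mu hlam hmu hsum⟩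

/-- On a convex set where an affine functional never vanishes, it has constant sign. -/
lemma stmt11_convex_dichotomy {C : Set E} (hC : IsConvexSet k E C) {a : E → k}
    (ha : IsAffineFunctional k E a) (h : ∀ z ∈ C, a z ≠ 0) :
    (∀ z ∈ C, 0 < a z) ∨ (∀ z ∈ C, a z < 0) := by
  by_contra hcon
  push_neg at hcon
  obtain ⟨⟨y, hyC, hy⟩, ⟨x, hxC, hx⟩⟩ := hcon
  have hy' : a y < 0 := lt_of_le_of_ne hy (h y hyC)
  have hx' : 0 < a x := lt_of_le_of_ne hx (Ne.symm (h x hxC))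
  set c : k := a x - a y with hc
  have hcpos : 0 < c := sub_pos.mpr (hy'.trans hx')
  have hcinv : 0 < c⁻¹ := aux_inv_pos hcpos
  have hax : a x = c + a y := by rw [hc]; abel
  have hlam : 0 ≤ c⁻¹ * (-(a y)) := (mul_pos hcinv (neg_pos.mpr hy')).le
  have hmu : 0 ≤ c⁻¹ * (a x) := (mul_pos hcinv hx').le
  have hsum : c⁻¹ * (-(a y)) + c⁻¹ * (a x) = 1 := by
    rw [← mul_add, neg_add_eq_sub, ← hc, inv_mul_cancel₀ hcpos.ne']
  have hz := hC x hxC y hyC _ _ hlam hmu hsum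
  have e1 : a x * (c⁻¹ * a y) = a y * (c⁻¹ * a x) := by
    rw [hax, add_mul, ← mul_assoc c, mul_inv_cancel₀ hcpos.ne', one_mul,
      mul_add c⁻¹, inv_mul_cancel₀ hcpos.ne', mul_add, mul_one]
  have hval := affine_comb ha x y hsum
  have hzero : a x * (c⁻¹ * (-(a y))) + a y * (c⁻¹ * a x) = 0 := by
    rw [mul_neg, mul_neg, e1, neg_add_cancel]
  rw [hzero] at hval
  exact h _ hz hval

variable (F : Set (E → k)) (Ω : Set E)

/-- `U` is a finite union of convex sets lying in `Bool(F, Ω)`. -/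
def RepOf (U : Set E) : Prop :=
  ∃ S : Finset (Set E), (∀ C ∈ S, MemBoolF F Ω C ∧ IsConvexSet k E C) ∧ U = ⋃₀ ↑S

variable {F Ω}

lemma memBoolF_sUnion (S : Finset (Set E)) (h : ∀ C ∈ S, MemBoolF F Ω C) :
    MemBoolF F Ω (⋃₀ ↑S) := by
  classical
  induction S using Finset.induction_on with
  | empty => simpa using MemBoolF.empty
  | @insert C S hCS ih =>
    rw [Finset.coe_insert, Set.sUnion_insert]
    exact MemBoolF.union (h C (Finset.mem_insert_self C S))
      (ih fun D hD => h D (Finset.mem_insert_of_mem hD))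

lemma repOf_union {U V : Set E} (hU : RepOf F Ω U) (hV : RepOf F Ω V) :
    RepOf F Ω (U ∪ V) := by
  classical
  obtain ⟨S, hS, rfl⟩ := hU
  obtain ⟨T, hT, rfl⟩ := hV
  refine ⟨S ∪ T, fun C hC => ?_, ?_⟩
  · rcases Finset.mem_union.mp hC with h | h
    · exact hS C h
    · exact hT C h
  · rw [Finset.coe_union, Set.sUnion_union]

lemma repOf_inter {U V : Set E} (hU : RepOf F Ω U) (hV : RepOf F Ω V) :
    RepOf F Ω (U ∩ V) := by
  classical
  obtain ⟨S, hS, rfl⟩ := hU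
  obtain ⟨T, hT, rfl⟩ := hV
  refine ⟨Finset.image₂ (· ∩ ·) S T, fun C hC => ?_, ?_⟩
  · obtain ⟨A, hA, B, hB, rfl⟩ := Finset.mem_image₂.mp hC
    exact ⟨MemBoolF.inter (hS A hA).1 (hT B hB).1, stmt11_convex_inter (hS A hA).2 (hT B hB).2⟩
  · ext z
    simp only [Set.mem_inter_iff, Set.mem_sUnion, Finset.mem_coe, Finset.mem_image₂]
    constructor
    · rintro ⟨⟨C, hC, hzC⟩, ⟨D, hD, hzD⟩⟩
      exact ⟨C ∩ D, ⟨C, hC, D, hD, rfl⟩, hzC, hzD⟩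
    · rintro ⟨W, ⟨C, hC, D, hD, rfl⟩, hz⟩
      exact ⟨⟨C, hC, hz.1⟩, ⟨D, hD, hz.2⟩⟩

lemma memBoolF_eqzero {f : E → k} (hf : f ∈ F) : MemBoolF F Ω {x ∈ Ω | f x = 0} := by
  have hset : {x ∈ Ω | f x = 0} = Ω \ ({x ∈ Ω | 0 < f x} ∪ {x ∈ Ω | f x < 0}) := by
    ext z
    simp only [Set.mem_setOf_eq, Set.mem_diff, Set.mem_union]
    constructor
    · rintro ⟨hz, h0⟩
      exact ⟨hz, by rintro (⟨_, h⟩ | ⟨_, h⟩) <;> rw [h0] at h <;> exact lt_irrefl 0 h⟩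
    · rintro ⟨hz, hn⟩
      push_neg at hn
      exact ⟨hz, le_antisymm (hn.1 hz) (hn.2 hz)⟩
  rw [hset]
  exact MemBoolF.sdiff MemBoolF.full
    (MemBoolF.union (MemBoolF.pos f hf) (MemBoolF.neg f hf))

/-- Every element of `Bool(F, Ω)` and its complement in `Ω` are finite unions of
convex sets in `Bool(F, Ω)`. -/
lemma stmt11_main_rep {U : Set E} (hΩ : IsConvexSet k E Ω)
    (hF : ∀ f ∈ F, IsAffineFunctional k E f) (hU : MemBoolF F Ω U) :
    U ⊆ Ω ∧ RepOf F Ω U ∧ RepOf F Ω (Ω \ U) := by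
  classical
  induction hU with
  | pos f hf =>
    refine ⟨Set.sep_subset _ _,
      ⟨{{x ∈ Ω | 0 < f x}}, ?_, by simp⟩,
      ⟨{{x ∈ Ω | f x < 0}, {x ∈ Ω | f x = 0}}, ?_, ?_⟩⟩
    · intro C hC
      rw [Finset.mem_singleton] at hC
      subst hC
      exact ⟨MemBoolF.pos f hf, stmt11_convex_pos hΩ (hF f hf)⟩
    · intro C hC
      rcases Finset.mem_insert.mp hC with h | h
      · subst h; exact ⟨MemBoolF.neg f hf, stmt11_convex_neg hΩ (hF f hf)⟩
      · rw [Finset.mem_singleton] at h; subst h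
        exact ⟨memBoolF_eqzero hf, stmt11_convex_zero hΩ (hF f hf)⟩
    · ext z
      simp only [Set.mem_diff, Set.mem_setOf_eq, Finset.coe_insert, Finset.coe_singleton,
        Set.sUnion_insert, Set.sUnion_singleton, Set.mem_union]
      constructor
      · rintro ⟨hz, hn⟩
        push_neg at hn
        rcases lt_or_eq_of_le (hn hz) with h | h
        · exact Or.inl ⟨hz, h⟩
        · exact Or.inr ⟨hz, h⟩
      · rintro (⟨hz, h⟩ | ⟨hz, h⟩)
        · exact ⟨hz, fun hc => absurd hc.2 (not_lt.mpr h.le)⟩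
        · exact ⟨hz, fun hc => absurd hc.2 (not_lt.mpr h.le)⟩
  | neg f hf =>
    refine ⟨Set.sep_subset _ _,
      ⟨{{x ∈ Ω | f x < 0}}, ?_, by simp⟩,
      ⟨{{x ∈ Ω | 0 < f x}, {x ∈ Ω | f x = 0}}, ?_, ?_⟩⟩
    · intro C hC
      rw [Finset.mem_singleton] at hC
      subst hC
      exact ⟨MemBoolF.neg f hf, stmt11_convex_neg hΩ (hF f hf)⟩
    · intro C hC
      rcases Finset.mem_insert.mp hC with h | h
      · subst h; exact ⟨MemBoolF.pos f hf, stmt11_convex_pos hΩ (hF f hf)⟩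
      · rw [Finset.mem_singleton] at h; subst h
        exact ⟨memBoolF_eqzero hf, stmt11_convex_zero hΩ (hF f hf)⟩
    · ext z
      simp only [Set.mem_diff, Set.mem_setOf_eq, Finset.coe_insert, Finset.coe_singleton,
        Set.sUnion_insert, Set.sUnion_singleton, Set.mem_union]
      constructor
      · rintro ⟨hz, hn⟩
        push_neg at hn
        rcases lt_or_eq_of_le (hn hz) with h | h
        · exact Or.inl ⟨hz, h⟩
        · exact Or.inr ⟨hz, h.symm⟩
      · rintro (⟨hz, h⟩ | ⟨hz, h⟩)
        · exact ⟨hz, fun hc => absurd hc.2 (not_lt.mpr h.le)⟩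
        · exact ⟨hz, fun hc => absurd hc.2 (not_lt.mpr h.ge)⟩
  | empty =>
    refine ⟨Set.empty_subset _, ⟨∅, by simp, by simp⟩,
      ⟨{Ω}, ?_, by simp⟩⟩
    intro C hC
    rw [Finset.mem_singleton] at hC
    subst hC
    exact ⟨MemBoolF.full, hΩ⟩
  | full =>
    refine ⟨subset_rfl, ⟨{Ω}, ?_, by simp⟩, ⟨∅, by simp, by simp⟩⟩
    intro C hC
    rw [Finset.mem_singleton] at hC
    subst hC
    exact ⟨MemBoolF.full, hΩ⟩
  | union hU hV ihU ihV =>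
    obtain ⟨hUΩ, hUr, hUc⟩ := ihU
    obtain ⟨hVΩ, hVr, hVc⟩ := ihV
    refine ⟨Set.union_subset hUΩ hVΩ, repOf_union hUr hVr, ?_⟩
    rw [← Set.diff_inter_diff]
    exact repOf_inter hUc hVc
  | inter hU hV ihU ihV =>
    obtain ⟨hUΩ, hUr, hUc⟩ := ihU
    obtain ⟨hVΩ, hVr, hVc⟩ := ihV
    refine ⟨(Set.inter_subset_left).trans hUΩ, repOf_inter hUr hVr, ?_⟩
    rw [Set.diff_inter]
    exact repOf_union hUc hVc
  | @sdiff U V hU hV ihU ihV =>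
    obtain ⟨hUΩ, hUr, hUc⟩ := ihU
    obtain ⟨hVΩ, hVr, hVc⟩ := ihV
    refine ⟨(Set.diff_subset).trans hUΩ, ?_, ?_⟩
    · have : U \ V = U ∩ (Ω \ V) := by
        ext z
        simp only [Set.mem_diff, Set.mem_inter_iff]
        exact ⟨fun ⟨h1, h2⟩ => ⟨h1, hUΩ h1, h2⟩, fun ⟨h1, _, h2⟩ => ⟨h1, h2⟩⟩
      rw [this]
      exact repOf_inter hUr hVc
    · rw [Set.diff_diff_right, Set.inter_eq_self_of_subset_right hVΩ]
      exact repOf_union hUc hVr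

end Aux

/-- for a convex set `Ω` in a right `k`-vector space `E` and affine
functionals `F ∪ {a}` on `E`, every `U ∈ Bool(F, Ω)` with `U ⊆ A⁺ ∪ A⁻` splits as
`U = U⁺ ∪ U⁻` with `U⁺, U⁻ ∈ Bool(F, Ω)`, `U⁺ ⊆ A⁺`, `U⁻ ⊆ A⁻`, where
`A⁺ = {x ∈ Ω : a x > 0}` and `A⁻ = {x ∈ Ω : a x < 0}`. -/
theorem stmt11 (k : Type*) [DivisionRing k] [LinearOrder k]
    [CovariantClass k k (· + ·) (· < ·)] [PosMulStrictMono k] [MulPosStrictMono k]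
    (E : Type*) [AddCommGroup E] [Module kᵐᵒᵖ E]
    (Ω : Set E) (hΩ : IsConvexSet k E Ω)
    (F : Set (E → k)) (hF : ∀ f ∈ F, IsAffineFunctional k E f)
    (a : E → k) (ha : IsAffineFunctional k E a)
    (U : Set E) (hU : MemBoolF F Ω U)
    (hsub : U ⊆ {x ∈ Ω | 0 < a x} ∪ {x ∈ Ω | a x < 0}) :
    ∃ Up Um : Set E, MemBoolF F Ω Up ∧ MemBoolF F Ω Um ∧ U = Up ∪ Um ∧
      Up ⊆ {x ∈ Ω | 0 < a x} ∧ Um ⊆ {x ∈ Ω | a x < 0} := by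
  classical
  obtain ⟨hUΩ, ⟨S, hS, rfl⟩, -⟩ := stmt11_main_rep hΩ hF hU
  -- On each convex piece, `a` never vanishes, so it has constant sign.
  have hne : ∀ C ∈ S, ∀ z ∈ C, a z ≠ 0 := by
    intro C hC z hz
    have hzU : z ∈ ⋃₀ (S : Set (Set E)) := ⟨C, hC, hz⟩
    rcases hsub hzU with ⟨_, h⟩ | ⟨_, h⟩
    · exact fun h0 => absurd h (by rw [h0]; exact lt_irrefl 0)
    · exact fun h0 => absurd h (by rw [h0]; exact lt_irrefl 0)
  have hdich : ∀ C ∈ S, (∀ z ∈ C, 0 < a z) ∨ (∀ z ∈ C, a z < 0) := fun C hC =>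
    stmt11_convex_dichotomy (hS C hC).2 ha (hne C hC)
  set Sp := S.filter (fun C => ∀ z ∈ C, 0 < a z) with hSp
  set Sm := S.filter (fun C => ¬ ∀ z ∈ C, 0 < a z) with hSm
  refine ⟨⋃₀ ↑Sp, ⋃₀ ↑Sm, memBoolF_sUnion _ (fun C hC => (hS C (Finset.mem_of_mem_filter C hC)).1),
    memBoolF_sUnion _ (fun C hC => (hS C (Finset.mem_of_mem_filter C hC)).1), ?_, ?_, ?_⟩
  · ext z
    simp only [Set.mem_sUnion, Set.mem_union, Finset.mem_coe, hSp, hSm, Finset.mem_filter]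
    constructor
    · rintro ⟨C, hC, hz⟩
      by_cases h : ∀ w ∈ C, 0 < a w
      · exact Or.inl ⟨C, ⟨hC, h⟩, hz⟩
      · exact Or.inr ⟨C, ⟨hC, h⟩, hz⟩
    · rintro (⟨C, ⟨hC, -⟩, hz⟩ | ⟨C, ⟨hC, -⟩, hz⟩) <;> exact ⟨C, hC, hz⟩
  · rintro z ⟨C, hC, hz⟩
    rw [Finset.mem_coe, hSp, Finset.mem_filter] at hC
    exact ⟨hUΩ ⟨C, hC.1, hz⟩, hC.2 z hz⟩
  · rintro z ⟨C, hC, hz⟩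
    rw [Finset.mem_coe, hSm, Finset.mem_filter] at hC
    rcases hdich C hC.1 with h | h
    · exact absurd h hC.2
    · exact ⟨hUΩ ⟨C, hC.1, hz⟩, h z hz⟩
end

section
/- Let k be a totally ordered division ring and let I ⊆ J be sets. Then: (1) ε_{I,J}(ρ^∨_{J,I}(Z)) = ε_{I,J}(ρ^∧_{J,I}(Z)) = Z for every Z ∈ Bool(k^(I), k^(J)); (2) ε_{I,J}[Bool(k^(I), k^(I))] = Bool(k^(I), k^(J)) ⊆ Bool(k^(J), k^(J)); (3) ρ^∧_{J,I}[Bool(k^(J), k^(J))] = ρ^∨_{J,I}[Bool(k^(J), k^(J))] = Bool(k^(I), k^(I)). -/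
open scoped Classical

/-- The linear functional `x ↦ Σ_i a_i * x_i` on `k^(ι)` associated with `a ∈ k^(ι)`. -/
def pairing {k ι : Type*} [DivisionRing k] (a x : ι →₀ k) : k :=
  a.sum fun i c => c * x i

/-- The vectors of `k^(ι)` supported on a subset `I ⊆ ι` (the copy of `k^(I)`
inside `k^(ι)`). -/
def suppIn {k ι : Type*} [Zero k] (I : Set ι) : Set (ι →₀ k) :=
  {y : ι →₀ k | ∀ i, i ∉ I → y i = 0}

/-- Membership in `Bool(A, Ω)`: the Boolean subalgebra of the powerset of `Ω` generated
by the sets `⟦a > 0⟧` and `⟦a < 0⟧` for `a ∈ A` (identifying `a` with its linear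
functional). -/
inductive MemBool {k ι : Type*} [DivisionRing k] [LinearOrder k]
    (A Ω : Set (ι →₀ k)) : Set (ι →₀ k) → Prop
  | pos (a : ι →₀ k) (ha : a ∈ A) : MemBool A Ω {x ∈ Ω | 0 < pairing a x}
  | neg (a : ι →₀ k) (ha : a ∈ A) : MemBool A Ω {x ∈ Ω | pairing a x < 0}
  | empty : MemBool A Ω ∅
  | full : MemBool A Ω Ω
  | union {U V : Set (ι →₀ k)} : MemBool A Ω U → MemBool A Ω V → MemBool A Ω (U ∪ V)
  | inter {U V : Set (ι →₀ k)} : MemBool A Ω U → MemBool A Ω V → MemBool A Ω (U ∩ V)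
  | sdiff {U V : Set (ι →₀ k)} : MemBool A Ω U → MemBool A Ω V → MemBool A Ω (U \ V)

/-- Restriction `y ↦ y↾I` of a vector to the coordinates in `I`. -/
noncomputable def restrictTo {k ι : Type*} [Zero k] (I : Set ι) (y : ι →₀ k) : ι →₀ k :=
  y.filter (· ∈ I)

/-- The canonical Boolean embedding `ε_{I,J} : P(k^(I)) → P(k^(J))`,
`X ↦ {y : y↾I ∈ X}`. -/
noncomputable def epsilonMap {k ι : Type*} [Zero k] (I : Set ι) (X : Set (ι →₀ k)) :
    Set (ι →₀ k) :=
  {y : ι →₀ k | restrictTo I y ∈ X}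

/-- The right adjoint `ρ^∧_{J,I}(Y) = {x ∈ k^(I) : every y with y↾I = x lies in Y}`. -/
noncomputable def rhoInf {k ι : Type*} [Zero k] (I : Set ι) (Y : Set (ι →₀ k)) :
    Set (ι →₀ k) :=
  {x : ι →₀ k | x ∈ suppIn I ∧ ∀ y : ι →₀ k, restrictTo I y = x → y ∈ Y}

/-- The left adjoint `ρ^∨_{J,I}(Y) = {y↾I : y ∈ Y}`. -/
noncomputable def rhoSup {k ι : Type*} [Zero k] (I : Set ι) (Y : Set (ι →₀ k)) :
    Set (ι →₀ k) :=
  restrictTo I '' Y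

set_option linter.unusedSectionVars false
set_option maxHeartbeats 1000000

section OrderHelpers
variable {k : Type*} [DivisionRing k] [LinearOrder k]
    [CovariantClass k k (· + ·) (· < ·)] [PosMulStrictMono k] [MulPosStrictMono k]

lemma myzero_lt_one : (0:k) < 1 := by
  rcases lt_trichotomy (0:k) 1 with h | h | h
  · exact h
  · exact absurd h.symm one_ne_zero
  · have h1 : (0:k) < -1 := neg_pos.mpr h
    have := mul_pos h1 h1
    rw [neg_mul_neg, one_mul] at this
    exact absurd h (not_lt.mpr this.le)

lemma mytwo_pos : (0:k) < 2 := by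
  have h := myzero_lt_one (k := k)
  have : (1:k) < 1 + 1 := by
    have := add_lt_add_left h (1:k)
    simpa using this
  rw [one_add_one_eq_two] at this
  exact h.trans this

lemma mymid_lt {a b : k} (h : a < b) : a < (a + b) * 2⁻¹ ∧ (a + b) * 2⁻¹ < b := by
  have h2 : (0:k) < 2 := mytwo_pos
  have h2' : (2:k) ≠ 0 := ne_of_gt h2
  have hm2 : ((a + b) * 2⁻¹) * 2 = a + b := by
    rw [mul_assoc, inv_mul_cancel₀ h2', mul_one]
  constructor
  · rw [← mul_lt_mul_iff_left₀ h2, hm2, mul_two]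
    exact add_lt_add_right h a
  · rw [← mul_lt_mul_iff_left₀ h2, hm2, mul_two]
    exact add_lt_add_left h b

lemma mylt_inv_mul_iff {α c t : k} (hα : 0 < α) : t < α⁻¹ * c ↔ α * t < c := by
  rw [← mul_lt_mul_iff_right₀ hα, mul_inv_cancel_left₀ (ne_of_gt hα)]

lemma myinv_mul_lt_iff {α c t : k} (hα : 0 < α) : α⁻¹ * c < t ↔ c < α * t := by
  rw [← mul_lt_mul_iff_right₀ hα, mul_inv_cancel_left₀ (ne_of_gt hα)]

lemma myeq_inv_mul_iff {α c t : k} (hα : α ≠ 0) : t = α⁻¹ * c ↔ α * t = c := by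
  constructor
  · rintro rfl; rw [mul_inv_cancel_left₀ hα]
  · rintro rfl; rw [inv_mul_cancel_left₀ hα]
end OrderHelpers

section PairingLemmas
variable {k ι : Type*} [DivisionRing k]

lemma pairing_add_right (a y z : ι →₀ k) : pairing (k := k) a (y + z) = pairing a y + pairing a z := by
  unfold pairing
  rw [← Finsupp.sum_add]
  apply Finsupp.sum_congr
  intro i _
  simp [mul_add]

lemma pairing_single_right (a : ι →₀ k) (j : ι) (t : k) :
    pairing a (Finsupp.single j t) = a j * t := by
  unfold pairing
  rw [Finsupp.sum_eq_single j]
  · simp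
  · intro b _ hb; simp [Finsupp.single_apply_eq_zero.mpr, Finsupp.single_eq_of_ne' (Ne.symm hb)]
  · simp

lemma pairing_add_left (a b y : ι →₀ k) : pairing (a + b) y = pairing a y + pairing b y := by
  unfold pairing
  rw [Finsupp.sum_add_index']
  · simp
  · intro i c1 c2; rw [add_mul]

lemma pairing_single_left (j : ι) (α : k) (y : ι →₀ k) :
    pairing (Finsupp.single j α) y = α * y j := by
  unfold pairing
  rw [Finsupp.sum_single_index]
  simp

lemma pairing_zero_left (y : ι →₀ k) : pairing (0 : ι →₀ k) y = 0 := by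
  unfold pairing; simp

lemma pairing_neg_left (a y : ι →₀ k) : pairing (-a) y = -pairing a y := by
  have h := pairing_add_left a (-a) y
  simp only [add_neg_cancel, pairing_zero_left] at h
  exact (neg_eq_of_add_eq_zero_right h.symm).symm

lemma pairing_smul_left (μ : k) (a y : ι →₀ k) : pairing (μ • a) y = μ * pairing a y := by
  unfold pairing
  rw [Finsupp.sum_smul_index, Finsupp.mul_sum]
  · apply Finsupp.sum_congr; intro i _; exact mul_assoc _ _ _
  · intro i; simp

lemma pairing_sub_left (a b y : ι →₀ k) : pairing (a - b) y = pairing a y - pairing b y := by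
  rw [sub_eq_add_neg, pairing_add_left, pairing_neg_left, sub_eq_add_neg]

lemma pairing_erase (j : ι) (a y : ι →₀ k) :
    pairing a y = pairing (a.erase j) y + a j * y j := by
  conv_lhs => rw [← Finsupp.erase_add_single j a]
  rw [pairing_add_left, pairing_single_left]
end PairingLemmas

section RestrictLemmas
variable {k ι : Type*} [DivisionRing k] (I : Set ι)

lemma restrict_apply (y : ι →₀ k) (i : ι) :
    restrictTo I y i = if i ∈ I then y i else 0 := by
  simp [restrictTo, Finsupp.filter_apply]

lemma restrict_mem_suppIn (y : ι →₀ k) : restrictTo I y ∈ suppIn I := by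
  intro i hi; simp [restrict_apply, hi]

lemma restrict_eq_self {x : ι →₀ k} (hx : x ∈ suppIn I) : restrictTo I x = x := by
  ext i; rw [restrict_apply]; split
  · rfl
  · exact (hx i ‹_›).symm

lemma restrict_add (y z : ι →₀ k) :
    restrictTo I (y + z) = restrictTo I y + restrictTo I z := by
  ext i; simp [restrict_apply]; split <;> simp

lemma restrict_single_of_not_mem {j : ι} (hj : j ∉ I) (t : k) :
    restrictTo I (Finsupp.single j t) = 0 := by
  ext i; rw [restrict_apply]; split
  · rw [Finsupp.single_apply]; split
    · exact absurd ‹j = i› (by rintro rfl; exact hj ‹_›)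
    · rfl
  · rfl

lemma mem_suppIn_iff_support (a : ι →₀ k) : a ∈ suppIn I ↔ ∀ i ∈ a.support, i ∈ I := by
  constructor
  · intro h i hi
    by_contra hiI
    exact (Finsupp.mem_support_iff.mp hi) (h i hiI)
  · intro h i hi
    by_contra h0
    exact hi (h i (Finsupp.mem_support_iff.mpr h0))

lemma pairing_restrict {a : ι →₀ k} (ha : a ∈ suppIn I) (y : ι →₀ k) :
    pairing a (restrictTo I y) = pairing a y := by
  unfold pairing
  apply Finsupp.sum_congr
  intro i hi
  rw [restrict_apply, if_pos ((mem_suppIn_iff_support I a).mp ha i hi)]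
end RestrictLemmas
section Parts12
variable {k ι : Type*} [DivisionRing k] [LinearOrder k]
    [CovariantClass k k (· + ·) (· < ·)] [PosMulStrictMono k] [MulPosStrictMono k]
    (I : Set ι)

/-- Sets in `Bool(k^(I), k^(J))` are cylinders over `I`. -/
lemma memBool_invariant {Z : Set (ι →₀ k)} (hZ : MemBool (suppIn I) Set.univ Z) :
    ∀ y : ι →₀ k, restrictTo I y ∈ Z ↔ y ∈ Z := by
  induction hZ with
  | pos a ha => intro y; simp [Set.mem_setOf_eq, pairing_restrict I ha]
  | neg a ha => intro y; simp [Set.mem_setOf_eq, pairing_restrict I ha]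
  | empty => intro y; simp
  | full => intro y; simp
  | union _ _ ih1 ih2 => intro y; simp [Set.mem_union, ih1 y, ih2 y]
  | inter _ _ ih1 ih2 => intro y; simp [Set.mem_inter_iff, ih1 y, ih2 y]
  | sdiff _ _ ih1 ih2 => intro y; simp [Set.mem_diff, ih1 y, ih2 y]

lemma memBool_subset {A Ω : Set (ι →₀ k)} {Z : Set (ι →₀ k)} (hZ : MemBool A Ω Z) :
    Z ⊆ Ω := by
  induction hZ with
  | pos a ha => exact Set.sep_subset _ _
  | neg a ha => exact Set.sep_subset _ _
  | empty => exact Set.empty_subset _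
  | full => exact subset_rfl
  | union _ _ ih1 ih2 => exact Set.union_subset ih1 ih2
  | inter _ _ ih1 ih2 => exact (Set.inter_subset_left).trans ih1
  | sdiff _ _ ih1 ih2 => exact (Set.diff_subset).trans ih1

/-- Part (1). -/
lemma part1 {Z : Set (ι →₀ k)} (hZ : MemBool (suppIn I) Set.univ Z) :
    epsilonMap I (rhoSup I Z) = Z ∧ epsilonMap I (rhoInf I Z) = Z := by
  have inv := memBool_invariant I hZ
  constructor
  · ext y
    simp only [epsilonMap, rhoSup, Set.mem_setOf_eq, Set.mem_image]
    constructor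
    · rintro ⟨z, hz, hzy⟩
      have h1 : restrictTo I z ∈ Z := (inv z).mpr hz
      rw [hzy] at h1
      exact (inv y).mp h1
    · intro hy
      exact ⟨y, hy, rfl⟩
  · ext y
    simp only [epsilonMap, rhoInf, Set.mem_setOf_eq]
    constructor
    · rintro ⟨-, h⟩
      exact h y rfl
    · intro hy
      refine ⟨restrict_mem_suppIn I y, fun w hw => ?_⟩
      rw [← inv w, hw]
      exact (inv y).mpr hy

lemma eps_memBool {U : Set (ι →₀ k)} (hU : MemBool (suppIn I) (suppIn I) U) :
    MemBool (suppIn I) Set.univ (epsilonMap I U) := by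
  have heps : ∀ X Y : Set (ι →₀ k), epsilonMap I (X ∪ Y) = epsilonMap I X ∪ epsilonMap I Y := by
    intro X Y; rfl
  induction hU with
  | pos a ha =>
    have : epsilonMap I {x ∈ suppIn I | 0 < pairing a x}
        = {x ∈ (Set.univ : Set (ι →₀ k)) | 0 < pairing a x} := by
      ext y
      simp only [epsilonMap, Set.mem_setOf_eq, Set.mem_univ, true_and]
      rw [pairing_restrict I ha]
      exact and_iff_right (restrict_mem_suppIn I y)
    rw [this]; exact MemBool.pos a ha
  | neg a ha =>
    have : epsilonMap I {x ∈ suppIn I | pairing a x < 0}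
        = {x ∈ (Set.univ : Set (ι →₀ k)) | pairing a x < 0} := by
      ext y
      simp only [epsilonMap, Set.mem_setOf_eq, Set.mem_univ, true_and]
      rw [pairing_restrict I ha]
      exact and_iff_right (restrict_mem_suppIn I y)
    rw [this]; exact MemBool.neg a ha
  | empty =>
    have : epsilonMap I (∅ : Set (ι →₀ k)) = ∅ := by ext y; simp [epsilonMap]
    rw [this]; exact MemBool.empty
  | full =>
    have : epsilonMap I (suppIn I : Set (ι →₀ k)) = Set.univ := by
      ext y; simp [epsilonMap, restrict_mem_suppIn I y]
    rw [this]; exact MemBool.full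
  | union _ _ ih1 ih2 => exact MemBool.union ih1 ih2
  | inter _ _ ih1 ih2 => exact MemBool.inter ih1 ih2
  | sdiff _ _ ih1 ih2 => exact MemBool.sdiff ih1 ih2

lemma sect_memBool {Z : Set (ι →₀ k)} (hZ : MemBool (suppIn I) Set.univ Z) :
    MemBool (suppIn I) (suppIn I) (Z ∩ suppIn I) := by
  induction hZ with
  | pos a ha =>
    have : {x ∈ (Set.univ : Set (ι →₀ k)) | 0 < pairing a x} ∩ suppIn I
        = {x ∈ suppIn I | 0 < pairing a x} := by
      ext y; simp only [Set.mem_inter_iff, Set.mem_setOf_eq, Set.mem_univ, true_and]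
      exact and_comm
    rw [this]; exact MemBool.pos a ha
  | neg a ha =>
    have : {x ∈ (Set.univ : Set (ι →₀ k)) | pairing a x < 0} ∩ suppIn I
        = {x ∈ suppIn I | pairing a x < 0} := by
      ext y; simp only [Set.mem_inter_iff, Set.mem_setOf_eq, Set.mem_univ, true_and]
      exact and_comm
    rw [this]; exact MemBool.neg a ha
  | empty => rw [Set.empty_inter]; exact MemBool.empty
  | full => rw [Set.univ_inter]; exact MemBool.full
  | union _ _ ih1 ih2 => rw [Set.union_inter_distrib_right]; exact MemBool.union ih1 ih2
  | inter hU hV ih1 ih2 =>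
    have h := MemBool.inter ih1 ih2
    convert h using 1
    ext y; simp only [Set.mem_inter_iff]; tauto
  | sdiff hU hV ih1 ih2 =>
    have h := MemBool.sdiff ih1 ih2
    convert h using 1
    ext y; simp only [Set.mem_inter_iff, Set.mem_diff]; tauto

lemma eps_sect {Z : Set (ι →₀ k)} (hZ : MemBool (suppIn I) Set.univ Z) :
    epsilonMap I (Z ∩ suppIn I) = Z := by
  have inv := memBool_invariant I hZ
  ext y
  simp only [epsilonMap, Set.mem_inter_iff, Set.mem_setOf_eq]
  rw [inv y]
  exact and_iff_left (restrict_mem_suppIn I y)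

lemma enlarge {Z : Set (ι →₀ k)} (hZ : MemBool (suppIn I) Set.univ Z) :
    MemBool (Set.univ : Set (ι →₀ k)) Set.univ Z := by
  induction hZ with
  | pos a ha => exact MemBool.pos a (Set.mem_univ a)
  | neg a ha => exact MemBool.neg a (Set.mem_univ a)
  | empty => exact MemBool.empty
  | full => exact MemBool.full
  | union _ _ ih1 ih2 => exact MemBool.union ih1 ih2
  | inter _ _ ih1 ih2 => exact MemBool.inter ih1 ih2
  | sdiff _ _ ih1 ih2 => exact MemBool.sdiff ih1 ih2

lemma rhoInf_eps {U : Set (ι →₀ k)} (hU : MemBool (suppIn I) (suppIn I) U) :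
    rhoInf I (epsilonMap I U) = U := by
  have hsub := memBool_subset hU
  ext x
  simp only [rhoInf, epsilonMap, Set.mem_setOf_eq]
  constructor
  · rintro ⟨hx, h⟩
    have := h x (restrict_eq_self I hx)
    rwa [restrict_eq_self I hx] at this
  · intro hx
    refine ⟨hsub hx, fun y hy => ?_⟩
    rw [hy]; exact hx

lemma rhoSup_eps {U : Set (ι →₀ k)} (hU : MemBool (suppIn I) (suppIn I) U) :
    rhoSup I (epsilonMap I U) = U := by
  have hsub := memBool_subset hU
  ext x
  simp only [rhoSup, epsilonMap, Set.mem_image, Set.mem_setOf_eq]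
  constructor
  · rintro ⟨y, hy, rfl⟩; exact hy
  · intro hx
    exact ⟨x, by rwa [restrict_eq_self I (hsub hx)], restrict_eq_self I (hsub hx)⟩

lemma rhoInf_eq_compl (Z : Set (ι →₀ k)) :
    rhoInf I Z = suppIn I \ rhoSup I (Set.univ \ Z) := by
  ext x
  simp only [rhoInf, rhoSup, Set.mem_diff, Set.mem_setOf_eq, Set.mem_image,
    Set.mem_univ, true_and]
  constructor
  · rintro ⟨hx, h⟩
    refine ⟨hx, ?_⟩
    rintro ⟨y, hy, hyx⟩
    exact hy (h y hyx)
  · rintro ⟨hx, h⟩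
    refine ⟨hx, fun y hy => ?_⟩
    by_contra hyZ
    exact h ⟨y, hyZ, hy⟩

end Parts12
section Cells
variable {k ι : Type*} [DivisionRing k] [LinearOrder k]
    [CovariantClass k k (· + ·) (· < ·)] [PosMulStrictMono k] [MulPosStrictMono k]

/-- A sign condition: `cmp (pairing a y) 0 = o`. -/
def holdsC (p : (ι →₀ k) × Ordering) (y : ι →₀ k) : Prop :=
  cmp (pairing p.1 y) 0 = p.2

def cellSet (c : List ((ι →₀ k) × Ordering)) : Set (ι →₀ k) :=
  {y | ∀ p ∈ c, holdsC p y}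

def unionSet (C : List (List ((ι →₀ k) × Ordering))) : Set (ι →₀ k) :=
  {y | ∃ c ∈ C, y ∈ cellSet c}

lemma cellSet_nil : cellSet ([] : List ((ι →₀ k) × Ordering)) = Set.univ := by
  ext y; simp [cellSet]

lemma cellSet_append (c₁ c₂ : List ((ι →₀ k) × Ordering)) :
    cellSet (c₁ ++ c₂) = cellSet c₁ ∩ cellSet c₂ := by
  ext y; simp only [cellSet, Set.mem_inter_iff, Set.mem_setOf_eq, List.mem_append]
  constructor
  · intro h; exact ⟨fun p hp => h p (Or.inl hp), fun p hp => h p (Or.inr hp)⟩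
  · rintro ⟨h1, h2⟩ p (hp | hp); exacts [h1 p hp, h2 p hp]

lemma unionSet_nil : unionSet ([] : List (List ((ι →₀ k) × Ordering))) = ∅ := by
  ext y; simp [unionSet]

lemma unionSet_cons (c : List ((ι →₀ k) × Ordering)) (C) :
    unionSet (c :: C) = cellSet c ∪ unionSet C := by
  ext y
  simp only [unionSet, Set.mem_union, Set.mem_setOf_eq, List.mem_cons]
  constructor
  · rintro ⟨c', (rfl | hc'), hy⟩
    · exact Or.inl hy
    · exact Or.inr ⟨c', hc', hy⟩
  · rintro (hy | ⟨c', hc', hy⟩)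
    · exact ⟨c, Or.inl rfl, hy⟩
    · exact ⟨c', Or.inr hc', hy⟩

lemma unionSet_append (C₁ C₂ : List (List ((ι →₀ k) × Ordering))) :
    unionSet (C₁ ++ C₂) = unionSet C₁ ∪ unionSet C₂ := by
  ext y; simp only [unionSet, Set.mem_union, Set.mem_setOf_eq, List.mem_append]
  constructor
  · rintro ⟨c, (hc | hc), hy⟩
    · exact Or.inl ⟨c, hc, hy⟩
    · exact Or.inr ⟨c, hc, hy⟩
  · rintro (⟨c, hc, hy⟩ | ⟨c, hc, hy⟩)
    · exact ⟨c, Or.inl hc, hy⟩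
    · exact ⟨c, Or.inr hc, hy⟩

def interC (C₁ C₂ : List (List ((ι →₀ k) × Ordering))) :
    List (List ((ι →₀ k) × Ordering)) :=
  C₁.flatMap fun c₁ => C₂.map fun c₂ => c₁ ++ c₂

lemma unionSet_interC (C₁ C₂ : List (List ((ι →₀ k) × Ordering))) :
    unionSet (interC C₁ C₂) = unionSet C₁ ∩ unionSet C₂ := by
  ext y
  simp only [unionSet, interC, Set.mem_inter_iff, Set.mem_setOf_eq, List.mem_flatMap,
    List.mem_map]
  constructor
  · rintro ⟨c, ⟨c₁, hc₁, c₂, hc₂, rfl⟩, hy⟩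
    rw [cellSet_append] at hy
    exact ⟨⟨c₁, hc₁, hy.1⟩, ⟨c₂, hc₂, hy.2⟩⟩
  · rintro ⟨⟨c₁, hc₁, hy₁⟩, ⟨c₂, hc₂, hy₂⟩⟩
    exact ⟨c₁ ++ c₂, ⟨c₁, hc₁, c₂, hc₂, rfl⟩, by rw [cellSet_append]; exact ⟨hy₁, hy₂⟩⟩

def othersO : Ordering → List Ordering
  | .lt => [.eq, .gt]
  | .eq => [.lt, .gt]
  | .gt => [.lt, .eq]

lemma ordering_not_eq (x o : Ordering) : ¬(x = o) ↔ ∃ o' ∈ othersO o, x = o' := by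
  cases x <;> cases o <;> simp [othersO]

lemma not_holds_iff (p : (ι →₀ k) × Ordering) (y : ι →₀ k) :
    ¬ holdsC p y ↔ ∃ o' ∈ othersO p.2, holdsC (p.1, o') y := by
  obtain ⟨a, o⟩ := p
  exact ordering_not_eq (cmp (pairing a y) 0) o

def complCell (c : List ((ι →₀ k) × Ordering)) : List (List ((ι →₀ k) × Ordering)) :=
  c.flatMap fun p => (othersO p.2).map fun o' => [(p.1, o')]

lemma unionSet_complCell (c : List ((ι →₀ k) × Ordering)) :
    unionSet (complCell c) = (cellSet c)ᶜ := by
  ext y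
  simp only [unionSet, complCell, Set.mem_compl_iff, cellSet, Set.mem_setOf_eq,
    List.mem_flatMap, List.mem_map, not_forall]
  constructor
  · rintro ⟨c', ⟨p, hp, o', ho', rfl⟩, hy⟩
    refine ⟨p, hp, ?_⟩
    rw [not_holds_iff]
    exact ⟨o', ho', hy (p.1, o') (List.mem_singleton_self _)⟩
  · rintro ⟨p, hp, hnp⟩
    rw [not_holds_iff] at hnp
    obtain ⟨o', ho', h⟩ := hnp
    refine ⟨[(p.1, o')], ⟨p, hp, o', ho', rfl⟩, ?_⟩
    intro q hq
    rw [List.mem_singleton] at hq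
    rwa [hq]

def complC (C : List (List ((ι →₀ k) × Ordering))) : List (List ((ι →₀ k) × Ordering)) :=
  C.foldr (fun c acc => interC (complCell c) acc) [[]]

lemma unionSet_complC (C : List (List ((ι →₀ k) × Ordering))) :
    unionSet (complC C) = (unionSet C)ᶜ := by
  induction C with
  | nil =>
    simp only [complC, List.foldr_nil, unionSet_nil]
    rw [unionSet_cons, cellSet_nil, unionSet_nil]
    simp
  | cons c C ih =>
    show unionSet (interC (complCell c) (complC C)) = _
    rw [unionSet_interC, unionSet_complCell, ih, unionSet_cons, Set.compl_union]

/-- Every set in `Bool(k^(J), k^(J))` is a finite union of sign cells. -/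
lemma memBool_decomp {Z : Set (ι →₀ k)}
    (hZ : MemBool (Set.univ : Set (ι →₀ k)) Set.univ Z) :
    ∃ C : List (List ((ι →₀ k) × Ordering)), Z = unionSet C := by
  induction hZ with
  | pos a ha =>
    refine ⟨[[(a, Ordering.gt)]], ?_⟩
    ext y
    rw [unionSet_cons, unionSet_nil]
    simp only [Set.mem_setOf_eq, Set.mem_univ, true_and, Set.union_empty, cellSet,
      List.mem_singleton, Set.mem_setOf_eq]
    constructor
    · intro h p hp; rw [hp]; unfold holdsC; rwa [cmp_eq_gt_iff]
    · intro h; have := h (a, Ordering.gt) rfl; unfold holdsC at this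
      rwa [cmp_eq_gt_iff] at this
  | neg a ha =>
    refine ⟨[[(a, Ordering.lt)]], ?_⟩
    ext y
    rw [unionSet_cons, unionSet_nil]
    simp only [Set.mem_setOf_eq, Set.mem_univ, true_and, Set.union_empty, cellSet,
      List.mem_singleton, Set.mem_setOf_eq]
    constructor
    · intro h p hp; rw [hp]; unfold holdsC; rwa [cmp_eq_lt_iff]
    · intro h; have := h (a, Ordering.lt) rfl; unfold holdsC at this
      rwa [cmp_eq_lt_iff] at this
  | empty => exact ⟨[], by rw [unionSet_nil]⟩
  | full => exact ⟨[[]], by rw [unionSet_cons, cellSet_nil, unionSet_nil]; simp⟩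
  | union _ _ ih1 ih2 =>
    obtain ⟨C₁, rfl⟩ := ih1; obtain ⟨C₂, rfl⟩ := ih2
    exact ⟨C₁ ++ C₂, (unionSet_append C₁ C₂).symm⟩
  | inter _ _ ih1 ih2 =>
    obtain ⟨C₁, rfl⟩ := ih1; obtain ⟨C₂, rfl⟩ := ih2
    exact ⟨interC C₁ C₂, (unionSet_interC C₁ C₂).symm⟩
  | sdiff _ _ ih1 ih2 =>
    obtain ⟨C₁, rfl⟩ := ih1; obtain ⟨C₂, rfl⟩ := ih2
    refine ⟨interC C₁ (complC C₂), ?_⟩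
    rw [unionSet_interC, unionSet_complC, Set.diff_eq]
end Cells
section FM
variable {k ι : Type*} [DivisionRing k] [LinearOrder k]
    [CovariantClass k k (· + ·) (· < ·)] [PosMulStrictMono k] [MulPosStrictMono k]

lemma add_lt_zero_iff' (a b : k) : a + b < 0 ↔ b < -a := by
  conv_lhs => rw [show (0:k) = a + -a by rw [add_neg_cancel]]
  exact add_lt_add_iff_left a

lemma zero_lt_add_iff' (a b : k) : 0 < a + b ↔ -a < b := by
  conv_lhs => rw [show (0:k) = a + -a by rw [add_neg_cancel]]
  exact add_lt_add_iff_left a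

lemma myneg_flip {a b : k} (h : a < b) : -b < -a := by
  have h1 := (add_lt_add_iff_right (-a)).mpr h
  rw [add_neg_cancel] at h1
  have h2 := (add_lt_add_iff_left (-b)).mpr h1
  rwa [add_zero, ← add_assoc, neg_add_cancel, zero_add] at h2

lemma myneg_lt_neg_iff (a b : k) : -a < -b ↔ b < a := by
  constructor
  · intro h
    have := myneg_flip h
    rwa [neg_neg, neg_neg] at this
  · exact myneg_flip

lemma myneg_le_neg_iff (a b : k) : -a ≤ -b ↔ b ≤ a := by
  rw [← not_lt, ← not_lt]
  exact not_congr (myneg_lt_neg_iff b a)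

lemma mylt_neg (a b : k) : a < -b ↔ b < -a := by
  constructor
  · intro h
    have := myneg_flip h
    rw [neg_neg] at this
    exact (myneg_lt_neg_iff _ _).mp (by rwa [neg_neg])
  · intro h
    have := myneg_flip h
    rwa [neg_neg] at this

lemma myneg_lt (a b : k) : -a < b ↔ -b < a := by
  constructor
  · intro h
    have := myneg_flip h
    rwa [neg_neg] at this
  · intro h
    have := myneg_flip h
    rwa [neg_neg] at this

lemma add_eq_zero_iff'' (a b : k) : a + b = 0 ↔ b = -a := by
  constructor
  · exact fun h => eq_neg_of_add_eq_zero_right h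
  · rintro rfl; exact add_neg_cancel a

lemma exists_lt_list (U : List k) : ∃ s : k, ∀ v ∈ U, s < v := by
  induction U with
  | nil => exact ⟨0, by simp⟩
  | cons u U ih =>
    obtain ⟨s, hs⟩ := ih
    refine ⟨min s (u - 1), fun v hv => ?_⟩
    rcases List.mem_cons.mp hv with rfl | hv
    · refine lt_of_le_of_lt (min_le_right _ _) ?_
      rw [sub_eq_add_neg]
      calc v + -1 < v + 0 := add_lt_add_right (neg_lt_zero.mpr myzero_lt_one) v
        _ = v := add_zero v
    · exact lt_of_le_of_lt (min_le_left _ _) (hs v hv)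

lemma exists_gt_list (L : List k) : ∃ s : k, ∀ v ∈ L, v < s := by
  obtain ⟨s, hs⟩ := exists_lt_list (L.map (fun v => -v))
  refine ⟨-s, fun v hv => ?_⟩
  have h := hs (-v) (List.mem_map.mpr ⟨v, hv, rfl⟩)
  exact (mylt_neg v s).mpr h

lemma max_mem_list (l : k) (L : List k) : ∃ m, m ∈ l :: L ∧ ∀ v ∈ l :: L, v ≤ m := by
  induction L generalizing l with
  | nil => exact ⟨l, List.mem_singleton_self l, by simp⟩
  | cons a L ih =>
    obtain ⟨m, hm, hmax⟩ := ih a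
    refine ⟨max l m, ?_, ?_⟩
    · rcases le_total l m with h | h
      · rw [max_eq_right h]
        rcases List.mem_cons.mp hm with rfl | hm
        · exact List.mem_cons_of_mem _ (List.mem_cons_self)
        · exact List.mem_cons_of_mem _ (List.mem_cons_of_mem _ hm)
      · rw [max_eq_left h]; exact List.mem_cons_self
    · intro v hv
      rcases List.mem_cons.mp hv with rfl | hv
      · exact le_max_left _ _
      · exact le_trans (hmax v hv) (le_max_right _ _)

lemma min_mem_list (l : k) (L : List k) : ∃ m, m ∈ l :: L ∧ ∀ v ∈ l :: L, m ≤ v := by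
  obtain ⟨m, hm, hmax⟩ := max_mem_list (-l) (L.map (fun v => -v))
  have hml : ∃ v ∈ l :: L, -v = m := by
    rcases List.mem_cons.mp hm with h | h
    · exact ⟨l, List.mem_cons_self, h.symm⟩
    · obtain ⟨v, hv, rfl⟩ := List.mem_map.mp h
      exact ⟨v, List.mem_cons_of_mem _ hv, rfl⟩
  obtain ⟨v0, hv0, hv0m⟩ := hml
  refine ⟨v0, hv0, fun v hv => ?_⟩
  have hvm : -v ≤ m := by
    apply hmax
    rcases List.mem_cons.mp hv with rfl | hv
    · exact List.mem_cons_self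
    · exact List.mem_cons_of_mem _ (List.mem_map.mpr ⟨v, hv, rfl⟩)
  rw [← hv0m] at hvm
  exact (myneg_le_neg_iff v v0).mp hvm

lemma exists_between_lists (L U : List k) (h : ∀ l ∈ L, ∀ u ∈ U, l < u) :
    ∃ s : k, (∀ l ∈ L, l < s) ∧ (∀ u ∈ U, s < u) := by
  cases L with
  | nil =>
    obtain ⟨s, hs⟩ := exists_lt_list U
    exact ⟨s, by simp, hs⟩
  | cons l L =>
    cases U with
    | nil =>
      obtain ⟨s, hs⟩ := exists_gt_list (l :: L)
      exact ⟨s, hs, by simp⟩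
    | cons u U =>
      obtain ⟨M, hM, hMmax⟩ := max_mem_list l L
      obtain ⟨m, hm, hmmin⟩ := min_mem_list u U
      have hMm : M < m := h M hM m hm
      obtain ⟨h1, h2⟩ := mymid_lt hMm
      exact ⟨(M + m) * 2⁻¹, fun v hv => lt_of_le_of_lt (hMmax v hv) h1,
        fun v hv => lt_of_lt_of_le h2 (hmmin v hv)⟩

/-- The coefficient vector of the bound induced by `a` when eliminating `j`. -/
noncomputable def dvec (j : ι) (a : ι →₀ k) : ι →₀ k := (-(a j)⁻¹) • (a.erase j)

def isLowP (j : ι) (p : (ι →₀ k) × Ordering) : Prop :=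
  (p.2 = Ordering.gt ∧ 0 < p.1 j) ∨ (p.2 = Ordering.lt ∧ p.1 j < 0)
def isUpP (j : ι) (p : (ι →₀ k) × Ordering) : Prop :=
  (p.2 = Ordering.lt ∧ 0 < p.1 j) ∨ (p.2 = Ordering.gt ∧ p.1 j < 0)
def isEqP (j : ι) (p : (ι →₀ k) × Ordering) : Prop := p.2 = Ordering.eq ∧ p.1 j ≠ 0

noncomputable def lowsOf (j : ι) (c : List ((ι →₀ k) × Ordering)) : List (ι →₀ k) :=
  c.filterMap fun p => if isLowP j p then some (dvec j p.1) else none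
noncomputable def upsOf (j : ι) (c : List ((ι →₀ k) × Ordering)) : List (ι →₀ k) :=
  c.filterMap fun p => if isUpP j p then some (dvec j p.1) else none
noncomputable def eqsOf (j : ι) (c : List ((ι →₀ k) × Ordering)) : List (ι →₀ k) :=
  c.filterMap fun p => if isEqP j p then some (dvec j p.1) else none
noncomputable def keepOf (j : ι) (c : List ((ι →₀ k) × Ordering)) :
    List ((ι →₀ k) × Ordering) :=
  c.filterMap fun p => if p.1 j = 0 then some p else none

lemma mem_lowsOf {j : ι} {c : List ((ι →₀ k) × Ordering)} {d : ι →₀ k} :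
    d ∈ lowsOf j c ↔ ∃ p ∈ c, isLowP j p ∧ dvec j p.1 = d := by
  simp only [lowsOf, List.mem_filterMap]
  constructor
  · rintro ⟨p, hp, h⟩
    by_cases hc : isLowP j p
    · rw [if_pos hc] at h; exact ⟨p, hp, hc, Option.some_injective _ h⟩
    · rw [if_neg hc] at h; exact absurd h (by simp)
  · rintro ⟨p, hp, hc, rfl⟩
    exact ⟨p, hp, if_pos hc⟩

lemma mem_upsOf {j : ι} {c : List ((ι →₀ k) × Ordering)} {d : ι →₀ k} :
    d ∈ upsOf j c ↔ ∃ p ∈ c, isUpP j p ∧ dvec j p.1 = d := by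
  simp only [upsOf, List.mem_filterMap]
  constructor
  · rintro ⟨p, hp, h⟩
    by_cases hc : isUpP j p
    · rw [if_pos hc] at h; exact ⟨p, hp, hc, Option.some_injective _ h⟩
    · rw [if_neg hc] at h; exact absurd h (by simp)
  · rintro ⟨p, hp, hc, rfl⟩
    exact ⟨p, hp, if_pos hc⟩

lemma mem_eqsOf {j : ι} {c : List ((ι →₀ k) × Ordering)} {d : ι →₀ k} :
    d ∈ eqsOf j c ↔ ∃ p ∈ c, isEqP j p ∧ dvec j p.1 = d := by
  simp only [eqsOf, List.mem_filterMap]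
  constructor
  · rintro ⟨p, hp, h⟩
    by_cases hc : isEqP j p
    · rw [if_pos hc] at h; exact ⟨p, hp, hc, Option.some_injective _ h⟩
    · rw [if_neg hc] at h; exact absurd h (by simp)
  · rintro ⟨p, hp, hc, rfl⟩
    exact ⟨p, hp, if_pos hc⟩

lemma mem_keepOf {j : ι} {c : List ((ι →₀ k) × Ordering)} {q : (ι →₀ k) × Ordering} :
    q ∈ keepOf j c ↔ q ∈ c ∧ q.1 j = 0 := by
  simp only [keepOf, List.mem_filterMap]
  constructor
  · rintro ⟨p, hp, h⟩
    by_cases hc : p.1 j = 0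
    · rw [if_pos hc] at h
      obtain rfl := Option.some_injective _ h
      exact ⟨hp, hc⟩
    · rw [if_neg hc] at h; exact absurd h (by simp)
  · rintro ⟨hp, hc⟩
    exact ⟨q, hp, if_pos hc⟩

lemma pairing_shift (a y : ι →₀ k) (j : ι) (t : k) :
    pairing a (y + Finsupp.single j t) = pairing a y + a j * t := by
  rw [pairing_add_right, pairing_single_right]

lemma pairing_dvec {j : ι} {a : ι →₀ k} (h : a j ≠ 0) (y : ι →₀ k) :
    pairing (dvec j a) y = y j - (a j)⁻¹ * pairing a y := by
  unfold dvec
  rw [pairing_smul_left]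
  have he : pairing (a.erase j) y = pairing a y - a j * y j :=
    eq_sub_of_add_eq (pairing_erase j a y).symm
  rw [he, neg_mul, mul_sub, ← mul_assoc, inv_mul_cancel₀ h, one_mul, neg_sub]

lemma classifyP (j : ι) (p : (ι →₀ k) × Ordering) :
    p.1 j = 0 ∨ isLowP j p ∨ isUpP j p ∨ isEqP j p := by
  rcases lt_trichotomy (p.1 j) 0 with h | h | h
  · rcases hp2 : p.2 with _ | _ | _
    · exact Or.inr (Or.inl (Or.inr ⟨hp2, h⟩))
    · exact Or.inr (Or.inr (Or.inr ⟨hp2, ne_of_lt h⟩))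
    · exact Or.inr (Or.inr (Or.inl (Or.inr ⟨hp2, h⟩)))
  · exact Or.inl h
  · rcases hp2 : p.2 with _ | _ | _
    · exact Or.inr (Or.inr (Or.inl (Or.inl ⟨hp2, h⟩)))
    · exact Or.inr (Or.inr (Or.inr ⟨hp2, ne_of_gt h⟩))
    · exact Or.inr (Or.inl (Or.inl ⟨hp2, h⟩))

lemma atom_keep {j : ι} {p : (ι →₀ k) × Ordering} (h : p.1 j = 0) (y : ι →₀ k) (t : k) :
    holdsC p (y + Finsupp.single j t) ↔ holdsC p y := by
  unfold holdsC
  rw [pairing_shift, h, zero_mul, add_zero]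

lemma sub_lt_add_iff' (A B t : k) : B - A < t + B ↔ -A < t := by
  rw [sub_eq_add_neg, add_comm B (-A), add_lt_add_iff_right]

lemma add_lt_sub_iff' (A B t : k) : t + B < B - A ↔ t < -A := by
  rw [sub_eq_add_neg, add_comm B (-A), add_lt_add_iff_right]

lemma add_eq_sub_iff' (A B t : k) : t + B = B - A ↔ t = -A := by
  rw [sub_eq_add_neg, add_comm B (-A), add_left_inj]

lemma atom_low {j : ι} {p : (ι →₀ k) × Ordering} (hp : isLowP j p) (y : ι →₀ k) (t : k) :
    holdsC p (y + Finsupp.single j t) ↔ pairing (dvec j p.1) y < t + y j := by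
  obtain ⟨a, o⟩ := p
  unfold holdsC
  rcases hp with ⟨ho, hα⟩ | ⟨ho, hα⟩
  · simp only at ho hα; subst ho
    rw [pairing_shift, pairing_dvec (ne_of_gt hα), sub_lt_add_iff']
    simp only
    rw [cmp_eq_gt_iff, zero_lt_add_iff', ← mul_neg, myinv_mul_lt_iff hα]
  · simp only at ho hα; subst ho
    rw [pairing_shift, pairing_dvec (ne_of_lt hα), sub_lt_add_iff']
    simp only
    have h1 : -((a j)⁻¹ * pairing a y) = (-(a j))⁻¹ * pairing a y := by
      rw [inv_neg, neg_mul]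
    rw [cmp_eq_lt_iff, add_lt_zero_iff', h1, myinv_mul_lt_iff (neg_pos.mpr hα), neg_mul,
      mylt_neg]

lemma atom_up {j : ι} {p : (ι →₀ k) × Ordering} (hp : isUpP j p) (y : ι →₀ k) (t : k) :
    holdsC p (y + Finsupp.single j t) ↔ t + y j < pairing (dvec j p.1) y := by
  obtain ⟨a, o⟩ := p
  unfold holdsC
  rcases hp with ⟨ho, hα⟩ | ⟨ho, hα⟩
  · simp only at ho hα; subst ho
    rw [pairing_shift, pairing_dvec (ne_of_gt hα), add_lt_sub_iff']
    simp only
    rw [cmp_eq_lt_iff, add_lt_zero_iff', ← mul_neg, mylt_inv_mul_iff hα]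
  · simp only at ho hα; subst ho
    rw [pairing_shift, pairing_dvec (ne_of_lt hα), add_lt_sub_iff']
    simp only
    have h1 : -((a j)⁻¹ * pairing a y) = (-(a j))⁻¹ * pairing a y := by
      rw [inv_neg, neg_mul]
    rw [cmp_eq_gt_iff, zero_lt_add_iff', h1, mylt_inv_mul_iff (neg_pos.mpr hα), neg_mul,
      myneg_lt]

lemma atom_eq {j : ι} {p : (ι →₀ k) × Ordering} (hp : isEqP j p) (y : ι →₀ k) (t : k) :
    holdsC p (y + Finsupp.single j t) ↔ t + y j = pairing (dvec j p.1) y := by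
  obtain ⟨a, o⟩ := p
  obtain ⟨ho, hα⟩ := hp
  simp only at ho hα; subst ho
  unfold holdsC
  rw [pairing_shift, pairing_dvec hα, add_eq_sub_iff']
  simp only
  rw [cmp_eq_eq_iff, add_eq_zero_iff'', ← mul_neg, myeq_inv_mul_iff hα]

/-- One step of Fourier–Motzkin elimination. -/
noncomputable def elimJ (j : ι) (c : List ((ι →₀ k) × Ordering)) :
    List ((ι →₀ k) × Ordering) :=
  keepOf j c ++
    (match eqsOf j c with
     | e :: rest =>
         rest.map (fun d => (d - e, Ordering.eq)) ++
         (lowsOf j c).map (fun d => (e - d, Ordering.gt)) ++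
         (upsOf j c).map (fun d => (d - e, Ordering.gt))
     | [] => (lowsOf j c).flatMap fun lo => (upsOf j c).map fun up => (up - lo, Ordering.gt))

lemma holds_sub_gt (d e y : ι →₀ k) :
    holdsC (d - e, Ordering.gt) y ↔ pairing e y < pairing d y := by
  unfold holdsC
  simp only
  rw [cmp_eq_gt_iff, pairing_sub_left, sub_pos]

lemma holds_sub_eq (d e y : ι →₀ k) :
    holdsC (d - e, Ordering.eq) y ↔ pairing d y = pairing e y := by
  unfold holdsC
  simp only
  rw [cmp_eq_eq_iff, pairing_sub_left, sub_eq_zero]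

/-- Key semantic property of one elimination step. -/
lemma elimJ_spec (j : ι) (c : List ((ι →₀ k) × Ordering)) (y : ι →₀ k) :
    (∃ t : k, ∀ p ∈ c, holdsC p (y + Finsupp.single j t)) ↔
      ∀ q ∈ elimJ j c, holdsC q y := by
  have mid : (∃ t : k, ∀ p ∈ c, holdsC p (y + Finsupp.single j t)) ↔
      ((∀ p ∈ keepOf j c, holdsC p y) ∧
        ∃ s : k, (∀ d ∈ lowsOf j c, pairing d y < s) ∧
          (∀ d ∈ upsOf j c, s < pairing d y) ∧
          (∀ d ∈ eqsOf j c, s = pairing d y)) := by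
    constructor
    · rintro ⟨t, ht⟩
      refine ⟨?_, t + y j, ?_, ?_, ?_⟩
      · intro p hp
        obtain ⟨hpc, h0⟩ := mem_keepOf.mp hp
        exact (atom_keep h0 y t).mp (ht p hpc)
      · intro d hd
        obtain ⟨p, hp, hl, rfl⟩ := mem_lowsOf.mp hd
        exact (atom_low hl y t).mp (ht p hp)
      · intro d hd
        obtain ⟨p, hp, hu, rfl⟩ := mem_upsOf.mp hd
        exact (atom_up hu y t).mp (ht p hp)
      · intro d hd
        obtain ⟨p, hp, he, rfl⟩ := mem_eqsOf.mp hd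
        exact (atom_eq he y t).mp (ht p hp)
    · rintro ⟨hK, s, hL, hU, hE⟩
      refine ⟨s - y j, fun p hp => ?_⟩
      have hs : s - y j + y j = s := sub_add_cancel s (y j)
      rcases classifyP j p with h0 | hl | hu | he
      · exact (atom_keep h0 y _).mpr (hK p (mem_keepOf.mpr ⟨hp, h0⟩))
      · rw [atom_low hl y _, hs]
        exact hL _ (mem_lowsOf.mpr ⟨p, hp, hl, rfl⟩)
      · rw [atom_up hu y _, hs]
        exact hU _ (mem_upsOf.mpr ⟨p, hp, hu, rfl⟩)
      · rw [atom_eq he y _, hs]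
        exact hE _ (mem_eqsOf.mpr ⟨p, hp, he, rfl⟩)
  rw [mid]
  unfold elimJ
  cases hE : eqsOf j c with
  | nil =>
    constructor
    · rintro ⟨hK, s, hL, hU, -⟩
      intro q hq
      rcases List.mem_append.mp hq with hq | hq
      · exact hK q hq
      · simp only [List.mem_flatMap, List.mem_map] at hq
        obtain ⟨lo, hlo, up, hup, rfl⟩ := hq
        rw [holds_sub_gt]
        exact lt_trans (hL lo hlo) (hU up hup)
    · intro h
      refine ⟨fun p hp => h p (List.mem_append.mpr (Or.inl hp)), ?_⟩
      have hpair : ∀ lo ∈ lowsOf j c, ∀ up ∈ upsOf j c,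
          pairing lo y < pairing up y := by
        intro lo hlo up hup
        have := h (up - lo, Ordering.gt)
          (List.mem_append.mpr (Or.inr (by
            simp only [List.mem_flatMap, List.mem_map]
            exact ⟨lo, hlo, up, hup, rfl⟩)))
        rwa [holds_sub_gt] at this
      obtain ⟨s, hsL, hsU⟩ := exists_between_lists
        ((lowsOf j c).map (fun d => pairing d y)) ((upsOf j c).map (fun d => pairing d y))
        (by
          intro l hl u hu
          obtain ⟨lo, hlo, rfl⟩ := List.mem_map.mp hl
          obtain ⟨up, hup, rfl⟩ := List.mem_map.mp hu
          exact hpair lo hlo up hup)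
      refine ⟨s, fun d hd => hsL _ (List.mem_map.mpr ⟨d, hd, rfl⟩),
        fun d hd => hsU _ (List.mem_map.mpr ⟨d, hd, rfl⟩), ?_⟩
      intro d hd
      exact absurd hd List.not_mem_nil
  | cons e rest =>
    have he_mem : e ∈ e :: rest := List.mem_cons_self
    constructor
    · rintro ⟨hK, s, hL, hU, hEq⟩
      have hse : s = pairing e y := hEq e he_mem
      intro q hq
      rcases List.mem_append.mp hq with hq | hq
      · exact hK q hq
      · rcases List.mem_append.mp hq with hq | hq
        · rcases List.mem_append.mp hq with hq | hq
          · obtain ⟨d, hd, rfl⟩ := List.mem_map.mp hq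
            rw [holds_sub_eq]
            have hd' : d ∈ e :: rest := List.mem_cons_of_mem _ hd
            rw [← hEq d hd', ← hse]
          · obtain ⟨d, hd, rfl⟩ := List.mem_map.mp hq
            rw [holds_sub_gt]
            rw [← hse]
            exact hL d hd
        · obtain ⟨d, hd, rfl⟩ := List.mem_map.mp hq
          rw [holds_sub_gt, ← hse]
          exact hU d hd
    · intro h
      have hK : ∀ p ∈ keepOf j c, holdsC p y :=
        fun p hp => h p (List.mem_append.mpr (Or.inl hp))
      refine ⟨hK, pairing e y, ?_, ?_, ?_⟩
      · intro d hd
        have := h (e - d, Ordering.gt) (List.mem_append.mpr (Or.inr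
          (List.mem_append.mpr (Or.inl (List.mem_append.mpr (Or.inr
            (List.mem_map.mpr ⟨d, hd, rfl⟩)))))))
        rwa [holds_sub_gt] at this
      · intro d hd
        have := h (d - e, Ordering.gt) (List.mem_append.mpr (Or.inr
          (List.mem_append.mpr (Or.inr (List.mem_map.mpr ⟨d, hd, rfl⟩)))))
        rwa [holds_sub_gt] at this
      · intro d hd
        rcases List.mem_cons.mp hd with rfl | hd
        · rfl
        · have := h (d - e, Ordering.eq) (List.mem_append.mpr (Or.inr
            (List.mem_append.mpr (Or.inl (List.mem_append.mpr (Or.inl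
              (List.mem_map.mpr ⟨d, hd, rfl⟩)))))))
          rw [holds_sub_eq] at this
          exact this.symm

lemma dvec_support {j : ι} {a : ι →₀ k} {i : ι} (hi : i ∈ (dvec j a).support) :
    i ≠ j ∧ i ∈ a.support := by
  unfold dvec at hi
  have h1 : i ∈ (a.erase j).support := Finsupp.support_smul hi
  rw [Finsupp.support_erase, Finset.mem_erase] at h1
  exact h1

lemma sub_support {a b : ι →₀ k} {i : ι} (hi : i ∈ (a - b).support) :
    i ∈ a.support ∨ i ∈ b.support := by
  by_contra h
  push_neg at h
  rw [Finsupp.mem_support_iff] at hi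
  apply hi
  rw [Finsupp.sub_apply, Finsupp.notMem_support_iff.mp h.1,
    Finsupp.notMem_support_iff.mp h.2, sub_zero]

lemma elimJ_support (j : ι) (c : List ((ι →₀ k) × Ordering)) :
    ∀ q ∈ elimJ j c, ∀ i ∈ q.1.support, i ≠ j ∧ ∃ p ∈ c, i ∈ p.1.support := by
  intro q hq i hi
  have Hlow : ∀ d ∈ lowsOf j c, ∀ i' ∈ d.support, i' ≠ j ∧ ∃ p ∈ c, i' ∈ p.1.support := by
    intro d hd i' hi'
    obtain ⟨p, hp, -, rfl⟩ := mem_lowsOf.mp hd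
    obtain ⟨h1, h2⟩ := dvec_support hi'
    exact ⟨h1, p, hp, h2⟩
  have Hup : ∀ d ∈ upsOf j c, ∀ i' ∈ d.support, i' ≠ j ∧ ∃ p ∈ c, i' ∈ p.1.support := by
    intro d hd i' hi'
    obtain ⟨p, hp, -, rfl⟩ := mem_upsOf.mp hd
    obtain ⟨h1, h2⟩ := dvec_support hi'
    exact ⟨h1, p, hp, h2⟩
  have Heq : ∀ d ∈ eqsOf j c, ∀ i' ∈ d.support, i' ≠ j ∧ ∃ p ∈ c, i' ∈ p.1.support := by
    intro d hd i' hi'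
    obtain ⟨p, hp, -, rfl⟩ := mem_eqsOf.mp hd
    obtain ⟨h1, h2⟩ := dvec_support hi'
    exact ⟨h1, p, hp, h2⟩
  unfold elimJ at hq
  rcases List.mem_append.mp hq with hq | hq
  · obtain ⟨hqc, h0⟩ := mem_keepOf.mp hq
    refine ⟨?_, q, hqc, hi⟩
    rintro rfl
    rw [Finsupp.mem_support_iff] at hi
    exact hi h0
  · rcases hEq : eqsOf j c with _ | ⟨e, rest⟩ <;> rw [hEq] at hq
    · simp only [List.mem_flatMap, List.mem_map] at hq
      obtain ⟨lo, hlo, up, hup2, rfl⟩ := hq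
      simp only at hi
      rcases sub_support hi with h | h
      · exact Hup up hup2 i h
      · exact Hlow lo hlo i h
    · have he : e ∈ eqsOf j c := by rw [hEq]; exact List.mem_cons_self
      rcases List.mem_append.mp hq with hq | hq
      · rcases List.mem_append.mp hq with hq | hq
        · obtain ⟨d, hd, rfl⟩ := List.mem_map.mp hq
          have hd' : d ∈ eqsOf j c := by rw [hEq]; exact List.mem_cons_of_mem _ hd
          simp only at hi
          rcases sub_support hi with h | h
          · exact Heq d hd' i h
          · exact Heq e he i h
        · obtain ⟨d, hd, rfl⟩ := List.mem_map.mp hq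
          simp only at hi
          rcases sub_support hi with h | h
          · exact Heq e he i h
          · exact Hlow d hd i h
      · obtain ⟨d, hd, rfl⟩ := List.mem_map.mp hq
        simp only at hi
        rcases sub_support hi with h | h
        · exact Hup d hd i h
        · exact Heq e he i h
end FM
section Proj
variable {k ι : Type*} [DivisionRing k] [LinearOrder k]
    [CovariantClass k k (· + ·) (· < ·)] [PosMulStrictMono k] [MulPosStrictMono k]

lemma proj_elim (I : Set ι) {j : ι} (hj : j ∉ I) (c : List ((ι →₀ k) × Ordering)) :
    rhoSup I (cellSet c) = rhoSup I (cellSet (elimJ j c)) := by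
  ext x
  simp only [rhoSup, Set.mem_image]
  constructor
  · rintro ⟨y, hy, rfl⟩
    refine ⟨y, ?_, rfl⟩
    intro q hq
    refine (elimJ_spec j c y).mp ⟨0, ?_⟩ q hq
    rw [Finsupp.single_zero, add_zero]
    exact hy
  · rintro ⟨y, hy, rfl⟩
    obtain ⟨t, ht⟩ := (elimJ_spec j c y).mpr hy
    refine ⟨y + Finsupp.single j t, ht, ?_⟩
    rw [restrict_add, restrict_single_of_not_mem I hj, add_zero]

lemma cell_memBool (I : Set ι) (c : List ((ι →₀ k) × Ordering))
    (hc : ∀ p ∈ c, p.1 ∈ suppIn I) :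
    MemBool (suppIn I) (suppIn I) (cellSet c ∩ suppIn I) := by
  induction c with
  | nil =>
    rw [cellSet_nil, Set.univ_inter]
    exact MemBool.full
  | cons p c ih =>
    have hcell : cellSet (p :: c) ∩ suppIn I =
        ({y | holdsC p y} ∩ suppIn I) ∩ (cellSet c ∩ suppIn I) := by
      ext y
      simp only [cellSet, Set.mem_inter_iff, Set.mem_setOf_eq, List.mem_cons]
      constructor
      · rintro ⟨h, hy⟩
        exact ⟨⟨h p (Or.inl rfl), hy⟩, fun q hq => h q (Or.inr hq), hy⟩
      · rintro ⟨⟨h1, hy⟩, h2, -⟩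
        exact ⟨fun q hq => by rcases hq with rfl | hq; exacts [h1, h2 q hq], hy⟩
    rw [hcell]
    refine MemBool.inter ?_ (ih fun q hq => hc q (List.mem_cons_of_mem _ hq))
    have hpI : p.1 ∈ suppIn I := hc p (List.mem_cons_self)
    rcases ho : p.2 with _ | _ | _
    · -- lt
      have : {y : ι →₀ k | holdsC p y} ∩ suppIn I = {x ∈ suppIn I | pairing p.1 x < 0} := by
        ext y
        simp only [holdsC, Set.mem_inter_iff, Set.mem_setOf_eq, ho, cmp_eq_lt_iff]
        exact and_comm
      rw [this]
      exact MemBool.neg p.1 hpI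
    · -- eq
      have : {y : ι →₀ k | holdsC p y} ∩ suppIn I =
          suppIn I \ ({x ∈ suppIn I | 0 < pairing p.1 x} ∪ {x ∈ suppIn I | pairing p.1 x < 0}) := by
        ext y
        simp only [holdsC, Set.mem_inter_iff, Set.mem_setOf_eq, ho, cmp_eq_eq_iff,
          Set.mem_diff, Set.mem_union]
        constructor
        · rintro ⟨h, hy⟩
          refine ⟨hy, ?_⟩
          rintro (⟨-, h2⟩ | ⟨-, h2⟩) <;> rw [h] at h2 <;> exact lt_irrefl 0 h2
        · rintro ⟨hy, h⟩
          push_neg at h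
          obtain ⟨h1, h2⟩ := h
          rcases lt_trichotomy (pairing p.1 y) 0 with hh | hh | hh
          · exact absurd hh (not_lt.mpr (h2 hy))
          · exact ⟨hh, hy⟩
          · exact absurd hh (not_lt.mpr (h1 hy))
      rw [this]
      exact MemBool.sdiff MemBool.full (MemBool.union (MemBool.pos p.1 hpI) (MemBool.neg p.1 hpI))
    · -- gt
      have : {y : ι →₀ k | holdsC p y} ∩ suppIn I = {x ∈ suppIn I | 0 < pairing p.1 x} := by
        ext y
        simp only [holdsC, Set.mem_inter_iff, Set.mem_setOf_eq, ho, cmp_eq_gt_iff]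
        exact and_comm
      rw [this]
      exact MemBool.pos p.1 hpI
end Proj

section Proj2
variable {k ι : Type*} [DivisionRing k] [LinearOrder k]
    [CovariantClass k k (· + ·) (· < ·)] [PosMulStrictMono k] [MulPosStrictMono k]

lemma proj_cell_memBool (I : Set ι) (T : Finset ι) :
    ∀ c : List ((ι →₀ k) × Ordering),
      (∀ p ∈ c, ∀ i ∈ p.1.support, i ∈ I ∨ i ∈ T) →
      MemBool (suppIn I) (suppIn I) (rhoSup I (cellSet c)) := by
  induction T using Finset.induction_on with
  | empty =>
    intro c hc
    have hsupp : ∀ p ∈ c, p.1 ∈ suppIn I := by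
      intro p hp
      rw [mem_suppIn_iff_support]
      intro i hi
      rcases hc p hp i hi with h | h
      · exact h
      · exact absurd h (Finset.notMem_empty i)
    have heq : rhoSup I (cellSet c) = cellSet c ∩ suppIn I := by
      ext x
      simp only [rhoSup, Set.mem_image, Set.mem_inter_iff]
      constructor
      · rintro ⟨y, hy, rfl⟩
        refine ⟨?_, restrict_mem_suppIn I y⟩
        intro p hp
        have := hy p hp
        unfold holdsC at this ⊢
        rwa [pairing_restrict I (hsupp p hp)]
      · rintro ⟨hy, hx⟩
        exact ⟨x, hy, restrict_eq_self I hx⟩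
    rw [heq]
    exact cell_memBool I c hsupp
  | insert _ _ hj ih =>
    rename_i j T
    intro c hc
    by_cases hjI : j ∈ I
    · apply ih c
      intro p hp i hi
      rcases hc p hp i hi with h | h
      · exact Or.inl h
      · rcases Finset.mem_insert.mp h with rfl | h
        · exact Or.inl hjI
        · exact Or.inr h
    · rw [proj_elim I hjI c]
      apply ih
      intro q hq i hi
      obtain ⟨hij, p, hp, hip⟩ := elimJ_support j c q hq i hi
      rcases hc p hp i hip with h | h
      · exact Or.inl h
      · rcases Finset.mem_insert.mp h with rfl | h
        · exact absurd rfl hij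
        · exact Or.inr h

noncomputable def suppsOf (c : List ((ι →₀ k) × Ordering)) : Finset ι :=
  c.foldr (fun p s => p.1.support ∪ s) ∅

lemma mem_suppsOf {c : List ((ι →₀ k) × Ordering)} {p} (hp : p ∈ c) {i : ι}
    (hi : i ∈ p.1.support) : i ∈ suppsOf c := by
  induction c with
  | nil => exact absurd hp List.not_mem_nil
  | cons q c ih =>
    show i ∈ q.1.support ∪ suppsOf c
    rcases List.mem_cons.mp hp with rfl | hp
    · exact Finset.mem_union_left _ hi
    · exact Finset.mem_union_right _ (ih hp)

lemma rhoSup_memBool (I : Set ι) {Z : Set (ι →₀ k)}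
    (hZ : MemBool (Set.univ : Set (ι →₀ k)) Set.univ Z) :
    MemBool (suppIn I) (suppIn I) (rhoSup I Z) := by
  obtain ⟨C, rfl⟩ := memBool_decomp hZ
  clear hZ
  induction C with
  | nil =>
    rw [unionSet_nil]
    have : rhoSup I (∅ : Set (ι →₀ k)) = ∅ := Set.image_empty _
    rw [this]
    exact MemBool.empty
  | cons c C ih =>
    rw [unionSet_cons]
    have : rhoSup I (cellSet c ∪ unionSet C) = rhoSup I (cellSet c) ∪ rhoSup I (unionSet C) :=
      Set.image_union _ _ _
    rw [this]
    refine MemBool.union ?_ ih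
    exact proj_cell_memBool I (suppsOf c) c (fun p hp i hi => Or.inr (mem_suppsOf hp hi))

lemma rhoInf_memBool (I : Set ι) {Z : Set (ι →₀ k)}
    (hZ : MemBool (Set.univ : Set (ι →₀ k)) Set.univ Z) :
    MemBool (suppIn I) (suppIn I) (rhoInf I Z) := by
  rw [rhoInf_eq_compl]
  exact MemBool.sdiff MemBool.full (rhoSup_memBool I (MemBool.sdiff MemBool.full hZ))
end Proj2
/-- with `J = ι` and `I ⊆ J`:
(1) `ε(ρ^∨ Z) = ε(ρ^∧ Z) = Z` for `Z ∈ Bool(k^(I), k^(J))`;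
(2) `ε[Bool(k^(I), k^(I))] = Bool(k^(I), k^(J)) ⊆ Bool(k^(J), k^(J))`;
(3) `ρ^∧[Bool(k^(J), k^(J))] = ρ^∨[Bool(k^(J), k^(J))] = Bool(k^(I), k^(I))`. -/
theorem stmt13 (k ι : Type*) [DivisionRing k] [LinearOrder k]
    [CovariantClass k k (· + ·) (· < ·)] [PosMulStrictMono k] [MulPosStrictMono k]
    (I : Set ι) :
    (∀ Z : Set (ι →₀ k), MemBool (suppIn I) Set.univ Z →
      epsilonMap I (rhoSup I Z) = Z ∧ epsilonMap I (rhoInf I Z) = Z) ∧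
    (epsilonMap I '' {U : Set (ι →₀ k) | MemBool (suppIn I) (suppIn I) U} =
        {U : Set (ι →₀ k) | MemBool (suppIn I) Set.univ U} ∧
      {U : Set (ι →₀ k) | MemBool (suppIn I) Set.univ U} ⊆
        {U : Set (ι →₀ k) | MemBool (Set.univ : Set (ι →₀ k)) Set.univ U}) ∧
    (rhoInf I '' {U : Set (ι →₀ k) | MemBool (Set.univ : Set (ι →₀ k)) Set.univ U} =
        {U : Set (ι →₀ k) | MemBool (suppIn I) (suppIn I) U} ∧
      rhoSup I '' {U : Set (ι →₀ k) | MemBool (Set.univ : Set (ι →₀ k)) Set.univ U} =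
        {U : Set (ι →₀ k) | MemBool (suppIn I) (suppIn I) U}) := by
  constructor
  · exact fun Z hZ => part1 I hZ
  constructor
  · constructor
    · ext U
      simp only [Set.mem_image, Set.mem_setOf_eq]
      constructor
      · rintro ⟨V, hV, rfl⟩
        exact eps_memBool I hV
      · intro hU
        exact ⟨U ∩ suppIn I, sect_memBool I hU, eps_sect I hU⟩
    · intro U hU
      exact enlarge I hU
  constructor
  · ext U
    simp only [Set.mem_image, Set.mem_setOf_eq]
    constructor
    · rintro ⟨Z, hZ, rfl⟩
      exact rhoInf_memBool I hZ
    · intro hU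
      exact ⟨epsilonMap I U, enlarge I (eps_memBool I hU), rhoInf_eps I hU⟩
  · ext U
    simp only [Set.mem_image, Set.mem_setOf_eq]
    constructor
    · rintro ⟨Z, hZ, rfl⟩
      exact rhoSup_memBool I hZ
    · intro hU
      exact ⟨epsilonMap I U, enlarge I (eps_memBool I hU), rhoSup_eps I hU⟩
end
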